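/- arXiv:1101.3041 — 9 statements merged into one kernel-verified Lean document; each statement's English description precedes it below -/
import Mathlib

section
/- Let θ ∈ ℝ with tan θ irrational, and let a, b, d be integers with gcd(a, b, d) = 1 and d ≠ 0. Then the set {(am + bn mod d, m·sin θ + n·cos θ) : m, n ∈ ℤ} is dense in (ℤ/dℤ) × ℝ. -/
theorem stmt0 (θ : ℝ) (hθ : Irrational (Real.tan θ))
    (a b d : ℤ) (hd : d ≠ 0) (hg : Int.gcd a (Int.gcd b d) = 1) :
    ∀ r : ℤ, ∀ y : ℝ, ∀ ε : ℝ, 0 < ε →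
      ∃ m n : ℤ, (a * m + b * n) % d = r % d ∧
        |(m : ℝ) * Real.sin θ + (n : ℝ) * Real.cos θ - y| < ε := by
  intro r y ε hε
  set ξ := Real.tan θ with hξ
  set s := Real.sin θ
  set c := Real.cos θ
  have hc : c ≠ 0 := by
    intro h
    apply hθ
    refine ⟨0, ?_⟩
    rw [Rat.cast_zero, hξ, Real.tan_eq_sin_div_cos, show Real.cos θ = 0 from h, div_zero]
  have hsc : s = ξ * c := (Real.tan_mul_cos hc).symm
  -- density of ℤξ + ℤ
  have hdense : Dense ((AddSubgroup.closure ({ξ, 1} : Set ℝ) : AddSubgroup ℝ) : Set ℝ) := by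
    rcases AddSubgroup.dense_or_cyclic (AddSubgroup.closure ({ξ, 1} : Set ℝ)) with h | ⟨g, hgS⟩
    · exact h
    · exfalso
      have h1 : ξ ∈ AddSubgroup.closure ({ξ, 1} : Set ℝ) :=
        AddSubgroup.subset_closure (by simp)
      have h2 : (1 : ℝ) ∈ AddSubgroup.closure ({ξ, 1} : Set ℝ) :=
        AddSubgroup.subset_closure (by simp)
      rw [hgS, AddSubgroup.mem_closure_singleton] at h1 h2
      obtain ⟨u, hu⟩ := h1
      obtain ⟨v, hv⟩ := h2
      have hv0 : v ≠ 0 := by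
        rintro rfl; simp at hv
      have : (v : ℝ) * ξ = u := by
        rw [← hu, ← zsmul_eq_mul]
        calc v • u • g = u • v • g := smul_comm v u g
        _ = u • (1:ℝ) := by rw [hv]
        _ = u := by simp
      apply hθ
      refine ⟨(u : ℚ) / (v : ℚ), ?_⟩
      have hvr : (v : ℝ) ≠ 0 := Int.cast_ne_zero.mpr hv0
      push_cast
      field_simp
      linarith [this]
  -- Bezout
  obtain ⟨m0, n0, k, hbz⟩ : ∃ m0 n0 k : ℤ, a * m0 + b * n0 + d * k = r := by
    have h1 : (Int.gcd a (Int.gcd b d) : ℤ) = a * Int.gcdA a (Int.gcd b d) +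
        (Int.gcd b d : ℤ) * Int.gcdB a (Int.gcd b d) := Int.gcd_eq_gcd_ab _ _
    have h2 : (Int.gcd b d : ℤ) = b * Int.gcdA b d + d * Int.gcdB b d := Int.gcd_eq_gcd_ab _ _
    rw [hg] at h1
    push_cast at h1
    refine ⟨Int.gcdA a (Int.gcd b d) * r,
      Int.gcdA b d * Int.gcdB a (Int.gcd b d) * r,
      Int.gcdB b d * Int.gcdB a (Int.gcd b d) * r, ?_⟩
    linear_combination (-r) * h1 + (-(Int.gcdB a (Int.gcd b d) * r)) * h2
  -- pick a dense point near t
  have hdc : (d : ℝ) * c ≠ 0 := mul_ne_zero (Int.cast_ne_zero.mpr hd) hc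
  set t : ℝ := (y - m0 * s - n0 * c) / ((d : ℝ) * c) with ht
  have hε' : 0 < ε / |(d : ℝ) * c| := div_pos hε (abs_pos.mpr hdc)
  obtain ⟨x, hxt, hxS⟩ := Metric.dense_iff.mp hdense t _ hε'
  rw [SetLike.mem_coe, AddSubgroup.mem_closure_pair] at hxS
  obtain ⟨u, v, huv⟩ := hxS
  refine ⟨m0 + d * u, n0 + d * v, ?_, ?_⟩
  · have : a * (m0 + d * u) + b * (n0 + d * v) = r + d * (a * u + b * v - k) := by ring_nf; omega
    rw [this, Int.add_mul_emod_self_left]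
  · have hx : x = u * ξ + v := by rw [← huv]; push_cast [zsmul_eq_mul]; ring
    have hxd : |x - t| < ε / |(d : ℝ) * c| := by
      rw [Metric.mem_ball, Real.dist_eq] at hxt; exact hxt
    have key : ((m0 + d * u : ℤ) : ℝ) * s + ((n0 + d * v : ℤ) : ℝ) * c - y
        = (d : ℝ) * c * (x - t) := by
      rw [hx, ht, hsc]
      field_simp
      push_cast
      ring
    rw [key, abs_mul]
    calc |(d:ℝ) * c| * |x - t| < |(d:ℝ) * c| * (ε / |(d:ℝ)*c|) := by
          exact mul_lt_mul_of_pos_left hxd (abs_pos.mpr hdc)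
      _ = ε := by field_simp
end

section
/- Let θ ∈ ℝ with tan θ irrational, ε > 0, and define Λ_F = {m·cos θ − n·sin θ : m, n ∈ ℤ, 0 ≤ m·sin θ + n·cos θ < ε}. Then Λ_F is a discrete subset of ℝ (i.e., it has no accumulation point in ℝ). -/
lemma aux_abs_bound (a b A : ℝ) (hA : 0 ≤ A) (h : a^2 + b^2 < A^2) : -A ≤ a ∧ a ≤ A := by
  constructor
  · nlinarith [sq_nonneg (a + A), sq_nonneg b]
  · nlinarith [sq_nonneg (a - A), sq_nonneg b]

theorem stmt2 (θ : ℝ) (hθ : Irrational (Real.tan θ)) (ε : ℝ) (hε : 0 < ε) :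
    ∀ x : ℝ, ∃ U ∈ nhds x,
      (U ∩ {x : ℝ | ∃ m n : ℤ, x = (m : ℝ) * Real.cos θ - (n : ℝ) * Real.sin θ ∧
        0 ≤ (m : ℝ) * Real.sin θ + (n : ℝ) * Real.cos θ ∧
        (m : ℝ) * Real.sin θ + (n : ℝ) * Real.cos θ < ε}).Finite := by
  intro x
  refine ⟨Metric.ball x 1, Metric.ball_mem_nhds x one_pos, ?_⟩
  set M : ℤ := ⌈|x| + 1 + ε⌉ with hM
  have hfin : ((fun p : ℤ × ℤ => (p.1 : ℝ) * Real.cos θ - (p.2 : ℝ) * Real.sin θ) ''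
      (Set.Icc (-M) M ×ˢ Set.Icc (-M) M)).Finite :=
    ((Set.finite_Icc _ _).prod (Set.finite_Icc _ _)).image _
  refine hfin.subset ?_
  rintro y ⟨hy, m, n, rfl, h0, hεlt⟩
  have hpy := Real.sin_sq_add_cos_sq θ
  rw [Metric.mem_ball, Real.dist_eq] at hy
  obtain ⟨hy1, hy2⟩ := abs_lt.mp hy
  have hx1 := le_abs_self x
  have hx2 := neg_abs_le x
  have hA : (0:ℝ) ≤ |x| + 1 + ε := by positivity
  have hMge : (|x| + 1 + ε) ≤ (M : ℝ) := Int.le_ceil _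
  have hid : (m : ℝ)^2 + (n : ℝ)^2 =
      ((m : ℝ) * Real.cos θ - (n : ℝ) * Real.sin θ)^2 +
      ((m : ℝ) * Real.sin θ + (n : ℝ) * Real.cos θ)^2 := by
    linear_combination (-(m:ℝ)^2 - (n:ℝ)^2) * hpy
  have h1 : ((m : ℝ) * Real.cos θ - (n : ℝ) * Real.sin θ)^2 < (|x| + 1)^2 := by
    nlinarith [abs_nonneg x]
  have h2 : ((m : ℝ) * Real.sin θ + (n : ℝ) * Real.cos θ)^2 < ε^2 := by nlinarith
  have hsq : (m : ℝ)^2 + (n : ℝ)^2 < (|x| + 1 + ε)^2 := by nlinarith [abs_nonneg x]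
  have hbm := aux_abs_bound (m : ℝ) (n : ℝ) _ hA hsq
  have hbn := aux_abs_bound (n : ℝ) (m : ℝ) _ hA (by linarith [hsq])
  have hm : m ∈ Set.Icc (-M) M := by
    constructor
    · have : (-M : ℝ) ≤ (m : ℝ) := by push_cast; linarith [hbm.1]
      exact_mod_cast this
    · have : (m : ℝ) ≤ (M : ℝ) := by linarith [hbm.2]
      exact_mod_cast this
  have hn : n ∈ Set.Icc (-M) M := by
    constructor
    · have : (-M : ℝ) ≤ (n : ℝ) := by push_cast; linarith [hbn.1]
      exact_mod_cast this
    · have : (n : ℝ) ≤ (M : ℝ) := by linarith [hbn.2]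
      exact_mod_cast this
  exact ⟨(m, n), ⟨hm, hn⟩, rfl⟩
end

section
/- Let θ ∈ ℝ with tan θ irrational, ε > 0, and Λ_F = {m·cos θ − n·sin θ : m, n ∈ ℤ, 0 ≤ m·sin θ + n·cos θ < ε}. Then Λ_F is relatively dense in ℝ: there exists R > 0 such that every interval of length R contains a point of Λ_F. -/
private lemma key_cap (s c : ℝ) (hc : 0 < c) (hpyth : s ^ 2 + c ^ 2 = 1)
    (hα : Irrational (s / c)) (ε : ℝ) (hε : 0 < ε) :
    ∃ R : ℝ, 0 < R ∧ ∀ y : ℝ, ∃ m n : ℤ,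
      0 ≤ (m : ℝ) * s + (n : ℝ) * c ∧
      (m : ℝ) * s + (n : ℝ) * c < ε ∧
      (m : ℝ) * c - (n : ℝ) * s ∈ Set.Icc y (y + R) := by
  set α : ℝ := s / c with hA
  have hcne : c ≠ 0 := ne_of_gt hc
  have hs : s = α * c := by rw [hA]; field_simp
  have habs : |s| ≤ 1 := by
    rw [← sq_le_one_iff_abs_le_one]; nlinarith [sq_nonneg c]
  set η : ℝ := min (ε / c) 1 with hηdef
  have hη : 0 < η := lt_min (div_pos hε hc) one_pos
  have hη1 : η ≤ 1 := min_le_right _ _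
  have hηε : η ≤ ε / c := min_le_left _ _
  -- find integers p q with 0 < p*α + q < η
  obtain ⟨N, hN⟩ := exists_nat_one_div_lt hη
  obtain ⟨j, k, hk0, hkN, hjk⟩ := Real.exists_int_int_abs_mul_sub_le α (Nat.succ_pos N)
  have hne : (k : ℝ) * α - j ≠ 0 := by
    intro h
    have : α = (j : ℝ) / (k : ℝ) := by
      have hk : (k : ℝ) ≠ 0 := by exact_mod_cast hk0.ne'
      rw [eq_div_iff hk]; linarith
    exact (irrational_iff_ne_rational α).mp hα j k hk0.ne' this
  have hsmall : |(k : ℝ) * α - j| < η := by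
    have h1 : (1 : ℝ) / (N + 1 + 1) ≤ 1 / (N + 1) := by
      apply one_div_le_one_div_of_le (by positivity); linarith
    calc |(k : ℝ) * α - j| ≤ 1 / (↑(N + 1) + 1) := hjk
      _ ≤ 1 / (N + 1) := by push_cast; exact h1
      _ < η := hN
  obtain ⟨p, q, hβ0, hβη⟩ : ∃ p q : ℤ, 0 < (p : ℝ) * α + q ∧ (p : ℝ) * α + q < η := by
    rcases lt_or_gt_of_ne hne with h | h
    · refine ⟨-k, j, ?_, ?_⟩ <;> push_cast <;>
        [linarith; (rw [abs_of_neg h] at hsmall; linarith)]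
    · exact ⟨k, -j, by push_cast; linarith, by
        rw [abs_of_pos h] at hsmall; push_cast; linarith⟩
  set β : ℝ := (p : ℝ) * α + q with hβdef
  set K : ℤ := ⌈1 / β⌉ with hKdef
  have hK0 : (0 : ℤ) ≤ K := Int.ceil_nonneg (by positivity)
  -- syndeticity
  have syn : ∀ m₀ : ℤ, ∃ m : ℤ, |(m : ℝ) - m₀| ≤ |(p : ℝ)| * K ∧
      Int.fract ((m : ℝ) * α) < η := by
    intro m₀
    set t : ℝ := Int.fract ((m₀ : ℝ) * α) with htdef
    have ht0 : 0 ≤ t := Int.fract_nonneg _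
    have ht1 : t < 1 := Int.fract_lt_one _
    set k : ℤ := ⌈(1 - t) / β⌉ with hkdef
    have hk0' : 0 ≤ k := Int.ceil_nonneg (div_nonneg (by linarith) hβ0.le)
    have hkK : k ≤ K := Int.ceil_le_ceil (by gcongr <;> linarith)
    have hkb1 : 1 - t ≤ (k : ℝ) * β := by
      have h1 := Int.le_ceil ((1 - t) / β)
      rw [div_le_iff₀ hβ0] at h1; rw [← hkdef] at h1; linarith
    have hkb2 : (k : ℝ) * β < 1 - t + β := by
      have h2 : (k : ℝ) < (1 - t) / β + 1 := Int.ceil_lt_add_one ((1 - t) / β)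
      have h3 : ((1 - t) / β + 1) * β = 1 - t + β := by field_simp
      nlinarith [mul_lt_mul_of_pos_right h2 hβ0]
    refine ⟨m₀ + k * p, ?_, ?_⟩
    · have : |(k : ℝ) * p| ≤ |(p : ℝ)| * K := by
        rw [abs_mul, abs_of_nonneg (by exact_mod_cast hk0' : (0:ℝ) ≤ (k:ℝ))]
        have : (k : ℝ) ≤ K := by exact_mod_cast hkK
        nlinarith [abs_nonneg ((p : ℝ))]
      have e : ((m₀ + k * p : ℤ) : ℝ) - m₀ = (k : ℝ) * p := by push_cast; ring
      rw [e]; exact this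
    · have e1 : ((m₀ + k * p : ℤ) : ℝ) * α = ((m₀ : ℝ) * α + k * β) - ((k * q : ℤ) : ℝ) := by
        push_cast [hβdef]; ring
      rw [e1, Int.fract_sub_intCast]
      have e2 : (m₀ : ℝ) * α + k * β = (⌊(m₀ : ℝ) * α⌋ : ℤ) + (t + k * β) := by
        rw [htdef, Int.fract]; ring
      rw [e2, Int.fract_intCast_add]
      have hfloor : ⌊t + (k : ℝ) * β⌋ = 1 := by
        rw [Int.floor_eq_iff]
        constructor
        · push_cast; linarith
        · push_cast; linarith
      have : Int.fract (t + (k : ℝ) * β) = t + k * β - 1 := by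
        rw [Int.fract, hfloor]; norm_num
      rw [this]; linarith
  -- final assembly
  refine ⟨2 * ((|(p : ℝ)| * K + 1) / c + ε / c), by positivity, fun y => ?_⟩
  set R : ℝ := 2 * ((|(p : ℝ)| * K + 1) / c + ε / c) with hRdef
  set x : ℝ := y + R / 2 with hxdef
  obtain ⟨m, hmb, hmf⟩ := syn ⌈c * x⌉
  refine ⟨m, -⌊(m : ℝ) * α⌋, ?_, ?_, ?_⟩
  · have : (m : ℝ) * s + ((-⌊(m : ℝ) * α⌋ : ℤ) : ℝ) * c = c * Int.fract ((m : ℝ) * α) := by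
      rw [Int.fract]; push_cast [hs]; ring
    rw [this]
    exact mul_nonneg hc.le (Int.fract_nonneg _)
  · have e : (m : ℝ) * s + ((-⌊(m : ℝ) * α⌋ : ℤ) : ℝ) * c = c * Int.fract ((m : ℝ) * α) := by
      rw [Int.fract]; push_cast [hs]; ring
    rw [e]
    have : Int.fract ((m : ℝ) * α) < ε / c := lt_of_lt_of_le hmf hηε
    calc c * Int.fract ((m : ℝ) * α) < c * (ε / c) := by
          exact (mul_lt_mul_iff_right₀ hc).mpr this
      _ = ε := by field_simp
  · have hφ : (m : ℝ) * c - ((-⌊(m : ℝ) * α⌋ : ℤ) : ℝ) * s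
        = (m : ℝ) / c - s * Int.fract ((m : ℝ) * α) := by
      rw [Int.fract, hA]
      field_simp
      push_cast
      linear_combination (m : ℝ) * hpyth
    rw [hφ]
    have hceil1 : c * x ≤ (⌈c * x⌉ : ℝ) := Int.le_ceil _
    have hceil2 : (⌈c * x⌉ : ℝ) < c * x + 1 := Int.ceil_lt_add_one _
    have hmb' := abs_le.mp hmb
    have hm1 : |(m : ℝ) - c * x| ≤ |(p : ℝ)| * K + 1 := by
      rw [abs_le]; constructor <;> linarith [hmb'.1, hmb'.2]
    have hm2 : |(m : ℝ) / c - x| ≤ (|(p : ℝ)| * K + 1) / c := by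
      have : (m : ℝ) / c - x = ((m : ℝ) - c * x) / c := by field_simp
      rw [this, abs_div, abs_of_pos hc]
      gcongr
    have h3 : |s * Int.fract ((m : ℝ) * α)| ≤ ε / c := by
      rw [abs_mul]
      have hf0 : 0 ≤ Int.fract ((m : ℝ) * α) := Int.fract_nonneg _
      have hfε : Int.fract ((m : ℝ) * α) ≤ ε / c := le_of_lt (lt_of_lt_of_le hmf hηε)
      rw [abs_of_nonneg hf0]
      calc |s| * Int.fract ((m : ℝ) * α) ≤ 1 * (ε / c) :=
            mul_le_mul habs hfε hf0 zero_le_one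
        _ = ε / c := one_mul _
    have hR2 : R / 2 = (|(p : ℝ)| * K + 1) / c + ε / c := by rw [hRdef]; ring
    obtain ⟨l2, r2⟩ := abs_le.mp hm2
    obtain ⟨l3, r3⟩ := abs_le.mp h3
    constructor <;> linarith [hxdef]

theorem stmt3 (θ : ℝ) (hθ : Irrational (Real.tan θ)) (ε : ℝ) (hε : 0 < ε) :
    ∃ R : ℝ, 0 < R ∧ ∀ y : ℝ, ∃ m n : ℤ,
      0 ≤ (m : ℝ) * Real.sin θ + (n : ℝ) * Real.cos θ ∧
      (m : ℝ) * Real.sin θ + (n : ℝ) * Real.cos θ < ε ∧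
      (m : ℝ) * Real.cos θ - (n : ℝ) * Real.sin θ ∈ Set.Icc y (y + R) := by
  have hpyth := Real.sin_sq_add_cos_sq θ
  have hc : Real.cos θ ≠ 0 := by
    intro h
    rw [Real.tan_eq_sin_div_cos, h, div_zero] at hθ
    exact hθ ⟨0, by norm_num⟩
  have hα : Irrational (Real.sin θ / Real.cos θ) := by
    rwa [Real.tan_eq_sin_div_cos] at hθ
  rcases hc.lt_or_gt with h | h
  · obtain ⟨R, hR, hfa⟩ := key_cap (-Real.sin θ) (-Real.cos θ) (by linarith)
      (by linear_combination hpyth) (by rwa [neg_div_neg_eq]) ε hε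
    refine ⟨R, hR, fun y => ?_⟩
    obtain ⟨m, n, h1, h2, h3⟩ := hfa y
    obtain ⟨h3a, h3b⟩ := Set.mem_Icc.mp h3
    refine ⟨-m, -n, ?_, ?_, Set.mem_Icc.mpr ⟨?_, ?_⟩⟩ <;> push_cast <;>
      push_cast at h1 h2 h3a h3b <;> linarith
  · exact key_cap _ _ h hpyth hα ε hε
end

section
/- Let θ ∈ (0, π/2) with tan θ irrational, ε = cos θ + sin θ, and enumerate Λ_F = {x_j : j ∈ ℤ} in increasing order with x_0 = 0. Then for each j: if x_j* ∈ [0, cos θ) then x_{j+1} − x_j = cos θ and x_{j+1}* − x_j* = sin θ; and if x_j* ∈ [cos θ, cos θ + sin θ) then x_{j+1} − x_j = sin θ and x_{j+1}* − x_j* = −cos θ. -/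
lemma stmt5_inj (θ : ℝ) (hc : Real.cos θ ≠ 0) (hθ : Irrational (Real.tan θ))
    (a b a' b' : ℤ)
    (h : (a:ℝ) * Real.cos θ - (b:ℝ) * Real.sin θ
        = (a':ℝ) * Real.cos θ - (b':ℝ) * Real.sin θ) : a = a' ∧ b = b' := by
  by_cases hb : b = b'
  · subst hb
    refine ⟨?_, rfl⟩
    have h2 : (a:ℝ) * Real.cos θ = (a':ℝ) * Real.cos θ := by linarith
    have := mul_right_cancel₀ hc h2
    exact_mod_cast this
  · exfalso
    apply hθ
    refine ⟨((a:ℚ) - a') / ((b:ℚ) - b'), ?_⟩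
    have hbb : (b:ℝ) - b' ≠ 0 := sub_ne_zero.mpr (by exact_mod_cast hb)
    push_cast
    rw [Real.tan_eq_sin_div_cos]
    field_simp
    linear_combination h

lemma stmt5_gap1 (c s : ℝ) (hc : 0 < c) (hs : 0 < s) (hcs : c^2 + s^2 = 1)
    (a1 b1 a2 b2 : ℤ)
    (hg1 : (0:ℝ) ≤ (a1:ℝ)*s + (b1:ℝ)*c) (ht1 : (a1:ℝ)*s + (b1:ℝ)*c < c)
    (hg2 : (0:ℝ) ≤ (a2:ℝ)*s + (b2:ℝ)*c) (hg2' : (a2:ℝ)*s + (b2:ℝ)*c < c + s)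
    (hf : (a1:ℝ)*c - (b1:ℝ)*s < (a2:ℝ)*c - (b2:ℝ)*s)
    (hf' : (a2:ℝ)*c - (b2:ℝ)*s < (a1:ℝ)*c - (b1:ℝ)*s + c) : False := by
  set p : ℤ := a2 - a1 with hp
  set q : ℤ := b2 - b1 with hq
  have hpR : (p:ℝ) = (a2:ℝ) - a1 := by push_cast [hp]; ring
  have hqR : (q:ℝ) = (b2:ℝ) - b1 := by push_cast [hq]; ring
  have hX1 : (0:ℝ) < (p:ℝ)*c - (q:ℝ)*s := by rw [hpR, hqR]; nlinarith
  have hX2 : (p:ℝ)*c - (q:ℝ)*s < c := by rw [hpR, hqR]; nlinarith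
  have hU1 : -c < (p:ℝ)*s + (q:ℝ)*c := by rw [hpR, hqR]; nlinarith
  have hU2 : (p:ℝ)*s + (q:ℝ)*c < c + s := by rw [hpR, hqR]; nlinarith
  have hidp : (p:ℝ) = ((p:ℝ)*c - (q:ℝ)*s)*c + ((p:ℝ)*s + (q:ℝ)*c)*s := by
    linear_combination (-(p:ℝ)) * hcs
  have hc1 : c < 1 := by nlinarith
  have hs1 : s < 1 := by nlinarith
  have hpl : (-1:ℝ) < (p:ℝ) := by nlinarith
  have hpu : (p:ℝ) < 2 := by nlinarith
  have hpint : p = 0 ∨ p = 1 := by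
    have h1 : (-1:ℤ) < p := by exact_mod_cast hpl
    have h2 : p < 2 := by exact_mod_cast hpu
    omega
  rcases hpint with h | h
  · have hp0 : (p:ℝ) = 0 := by exact_mod_cast h
    rw [hp0] at hX1 hU1
    have hq0 : (q:ℝ) < 0 := by
      by_contra hcon
      push_neg at hcon
      have := mul_nonneg hcon hs.le
      linarith
    have hqle : q ≤ -1 := by
      have : q < 0 := by exact_mod_cast hq0
      omega
    have hqr : (q:ℝ) ≤ -1 := by exact_mod_cast hqle
    have : (q:ℝ)*c ≤ (-1)*c := mul_le_mul_of_nonneg_right hqr hc.le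
    linarith
  · have hp1 : (p:ℝ) = 1 := by exact_mod_cast h
    rw [hp1] at hX2 hU2
    have hq0 : (0:ℝ) < (q:ℝ) := by
      by_contra hcon
      push_neg at hcon
      have := mul_nonpos_of_nonpos_of_nonneg hcon hs.le
      linarith
    have hqge : 1 ≤ q := by
      have : 0 < q := by exact_mod_cast hq0
      omega
    have hqr : (1:ℝ) ≤ (q:ℝ) := by exact_mod_cast hqge
    have : (1:ℝ)*c ≤ (q:ℝ)*c := mul_le_mul_of_nonneg_right hqr hc.le
    linarith

lemma stmt5_gap2 (c s : ℝ) (hc : 0 < c) (hs : 0 < s) (hcs : c^2 + s^2 = 1)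
    (a1 b1 a2 b2 : ℤ)
    (ht0 : c ≤ (a1:ℝ)*s + (b1:ℝ)*c) (ht1 : (a1:ℝ)*s + (b1:ℝ)*c < c + s)
    (hg2 : (0:ℝ) ≤ (a2:ℝ)*s + (b2:ℝ)*c) (hg2' : (a2:ℝ)*s + (b2:ℝ)*c < c + s)
    (hf : (a1:ℝ)*c - (b1:ℝ)*s < (a2:ℝ)*c - (b2:ℝ)*s)
    (hf' : (a2:ℝ)*c - (b2:ℝ)*s < (a1:ℝ)*c - (b1:ℝ)*s + s) : False := by
  set p : ℤ := a2 - a1 with hp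
  set q : ℤ := b2 - b1 with hq
  have hpR : (p:ℝ) = (a2:ℝ) - a1 := by push_cast [hp]; ring
  have hqR : (q:ℝ) = (b2:ℝ) - b1 := by push_cast [hq]; ring
  have hX1 : (0:ℝ) < (p:ℝ)*c - (q:ℝ)*s := by rw [hpR, hqR]; nlinarith
  have hX2 : (p:ℝ)*c - (q:ℝ)*s < s := by rw [hpR, hqR]; nlinarith
  have hU1 : -(c+s) < (p:ℝ)*s + (q:ℝ)*c := by rw [hpR, hqR]; nlinarith
  have hU2 : (p:ℝ)*s + (q:ℝ)*c < s := by rw [hpR, hqR]; nlinarith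
  have hidp : (p:ℝ) = ((p:ℝ)*c - (q:ℝ)*s)*c + ((p:ℝ)*s + (q:ℝ)*c)*s := by
    linear_combination (-(p:ℝ)) * hcs
  have hc1 : c < 1 := by nlinarith
  have hs1 : s < 1 := by nlinarith
  have hpl : (-2:ℝ) < (p:ℝ) := by nlinarith
  have hpu : (p:ℝ) < 2 := by nlinarith
  have hpint : p = -1 ∨ p = 0 ∨ p = 1 := by
    have h1 : (-2:ℤ) < p := by exact_mod_cast hpl
    have h2 : p < 2 := by exact_mod_cast hpu
    omega
  rcases hpint with h | h | h
  · have hp0 : (p:ℝ) = -1 := by exact_mod_cast h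
    rw [hp0] at hX1 hU1
    have hq0 : (q:ℝ) < 0 := by
      by_contra hcon
      push_neg at hcon
      have := mul_nonneg hcon hs.le
      linarith
    have hqle : q ≤ -1 := by
      have : q < 0 := by exact_mod_cast hq0
      omega
    have hqr : (q:ℝ) ≤ -1 := by exact_mod_cast hqle
    have : (q:ℝ)*c ≤ (-1)*c := mul_le_mul_of_nonneg_right hqr hc.le
    linarith
  · have hp0 : (p:ℝ) = 0 := by exact_mod_cast h
    rw [hp0] at hX1 hX2
    have hq0 : (q:ℝ) < 0 := by
      by_contra hcon
      push_neg at hcon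
      have := mul_nonneg hcon hs.le
      linarith
    have hqle : q ≤ -1 := by
      have : q < 0 := by exact_mod_cast hq0
      omega
    have hqr : (q:ℝ) ≤ -1 := by exact_mod_cast hqle
    have : (q:ℝ)*s ≤ (-1)*s := mul_le_mul_of_nonneg_right hqr hs.le
    linarith
  · have hp1 : (p:ℝ) = 1 := by exact_mod_cast h
    rw [hp1] at hX1 hX2 hU2
    rcases lt_trichotomy q 0 with hqc | hqc | hqc
    · have hqle : q ≤ -1 := by omega
      have hqr : (q:ℝ) ≤ -1 := by exact_mod_cast hqle
      have : (q:ℝ)*s ≤ (-1)*s := mul_le_mul_of_nonneg_right hqr hs.le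
      linarith
    · have hq0 : (q:ℝ) = 0 := by exact_mod_cast hqc
      rw [hq0] at hU2
      linarith
    · have hqge : 1 ≤ q := by omega
      have hqr : (1:ℝ) ≤ (q:ℝ) := by exact_mod_cast hqge
      have : (1:ℝ)*c ≤ (q:ℝ)*c := mul_le_mul_of_nonneg_right hqr hc.le
      linarith

theorem stmt5 (θ : ℝ) (h1 : 0 < θ) (h2 : θ < Real.pi / 2)
    (hθ : Irrational (Real.tan θ)) (m n : ℤ → ℤ)
    (hwin : ∀ j : ℤ, 0 ≤ (m j : ℝ) * Real.sin θ + (n j : ℝ) * Real.cos θ ∧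
      (m j : ℝ) * Real.sin θ + (n j : ℝ) * Real.cos θ < Real.cos θ + Real.sin θ)
    (hmono : StrictMono (fun j : ℤ => (m j : ℝ) * Real.cos θ - (n j : ℝ) * Real.sin θ))
    (h0 : m 0 = 0 ∧ n 0 = 0)
    (hrange : ∀ m' n' : ℤ,
      0 ≤ (m' : ℝ) * Real.sin θ + (n' : ℝ) * Real.cos θ →
      (m' : ℝ) * Real.sin θ + (n' : ℝ) * Real.cos θ < Real.cos θ + Real.sin θ →
      ∃ j : ℤ, m j = m' ∧ n j = n') :
    ∀ j : ℤ,
      ((m j : ℝ) * Real.sin θ + (n j : ℝ) * Real.cos θ ∈ Set.Ico 0 (Real.cos θ) →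
        ((m (j+1) : ℝ) * Real.cos θ - (n (j+1) : ℝ) * Real.sin θ) -
          ((m j : ℝ) * Real.cos θ - (n j : ℝ) * Real.sin θ) = Real.cos θ ∧
        ((m (j+1) : ℝ) * Real.sin θ + (n (j+1) : ℝ) * Real.cos θ) -
          ((m j : ℝ) * Real.sin θ + (n j : ℝ) * Real.cos θ) = Real.sin θ) ∧
      ((m j : ℝ) * Real.sin θ + (n j : ℝ) * Real.cos θ ∈
          Set.Ico (Real.cos θ) (Real.cos θ + Real.sin θ) →
        ((m (j+1) : ℝ) * Real.cos θ - (n (j+1) : ℝ) * Real.sin θ) -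
          ((m j : ℝ) * Real.cos θ - (n j : ℝ) * Real.sin θ) = Real.sin θ ∧
        ((m (j+1) : ℝ) * Real.sin θ + (n (j+1) : ℝ) * Real.cos θ) -
          ((m j : ℝ) * Real.sin θ + (n j : ℝ) * Real.cos θ) = -Real.cos θ) := by
  have hc : 0 < Real.cos θ :=
    Real.cos_pos_of_mem_Ioo ⟨by linarith [Real.pi_pos], h2⟩
  have hs : 0 < Real.sin θ :=
    Real.sin_pos_of_pos_of_lt_pi h1 (by linarith [Real.pi_pos])
  have hcs : Real.cos θ ^ 2 + Real.sin θ ^ 2 = 1 := Real.cos_sq_add_sin_sq θ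
  intro j
  constructor
  · rintro ⟨ht0, ht1⟩
    obtain ⟨k, hk1, hk2⟩ := hrange (m j + 1) (n j)
      (by push_cast; linarith) (by push_cast; linarith)
    have hFk : (m k : ℝ) * Real.cos θ - (n k : ℝ) * Real.sin θ
        = ((m j : ℝ) * Real.cos θ - (n j : ℝ) * Real.sin θ) + Real.cos θ := by
      rw [hk1, hk2]; push_cast; ring
    have hjk : j < k := by
      rw [← hmono.lt_iff_lt]
      linarith
    have hle : (m (j+1) : ℝ) * Real.cos θ - (n (j+1) : ℝ) * Real.sin θ
        ≤ (m k : ℝ) * Real.cos θ - (n k : ℝ) * Real.sin θ :=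
      hmono.monotone (by omega : j + 1 ≤ k)
    have hlt : (m j : ℝ) * Real.cos θ - (n j : ℝ) * Real.sin θ
        < (m (j+1) : ℝ) * Real.cos θ - (n (j+1) : ℝ) * Real.sin θ :=
      hmono (lt_add_one j)
    have heq : (m (j+1) : ℝ) * Real.cos θ - (n (j+1) : ℝ) * Real.sin θ
        = (m k : ℝ) * Real.cos θ - (n k : ℝ) * Real.sin θ := by
      rcases lt_or_eq_of_le hle with hcase | hcase
      · exact (stmt5_gap1 (Real.cos θ) (Real.sin θ) hc hs hcs
          (m j) (n j) (m (j+1)) (n (j+1)) (hwin j).1 ht1 (hwin (j+1)).1 (hwin (j+1)).2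
          hlt (by linarith)).elim
      · exact hcase
    have hE : (m (j+1) : ℝ) * Real.cos θ - (n (j+1) : ℝ) * Real.sin θ
        = ((m j + 1 : ℤ) : ℝ) * Real.cos θ - ((n j : ℤ) : ℝ) * Real.sin θ := by
      push_cast; linarith
    obtain ⟨e1, e2⟩ := stmt5_inj θ hc.ne' hθ _ _ _ _ hE
    refine ⟨by rw [e1, e2]; push_cast; ring, by rw [e1, e2]; push_cast; ring⟩
  · rintro ⟨ht0, ht1⟩
    obtain ⟨k, hk1, hk2⟩ := hrange (m j) (n j - 1)
      (by push_cast; linarith) (by push_cast; linarith)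
    have hFk : (m k : ℝ) * Real.cos θ - (n k : ℝ) * Real.sin θ
        = ((m j : ℝ) * Real.cos θ - (n j : ℝ) * Real.sin θ) + Real.sin θ := by
      rw [hk1, hk2]; push_cast; ring
    have hjk : j < k := by
      rw [← hmono.lt_iff_lt]
      linarith
    have hle : (m (j+1) : ℝ) * Real.cos θ - (n (j+1) : ℝ) * Real.sin θ
        ≤ (m k : ℝ) * Real.cos θ - (n k : ℝ) * Real.sin θ :=
      hmono.monotone (by omega : j + 1 ≤ k)
    have hlt : (m j : ℝ) * Real.cos θ - (n j : ℝ) * Real.sin θ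
        < (m (j+1) : ℝ) * Real.cos θ - (n (j+1) : ℝ) * Real.sin θ :=
      hmono (lt_add_one j)
    have heq : (m (j+1) : ℝ) * Real.cos θ - (n (j+1) : ℝ) * Real.sin θ
        = (m k : ℝ) * Real.cos θ - (n k : ℝ) * Real.sin θ := by
      rcases lt_or_eq_of_le hle with hcase | hcase
      · exact (stmt5_gap2 (Real.cos θ) (Real.sin θ) hc hs hcs
          (m j) (n j) (m (j+1)) (n (j+1)) ht0 ht1 (hwin (j+1)).1 (hwin (j+1)).2
          hlt (by linarith)).elim
      · exact hcase
    have hE : (m (j+1) : ℝ) * Real.cos θ - (n (j+1) : ℝ) * Real.sin θ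
        = ((m j : ℤ) : ℝ) * Real.cos θ - ((n j - 1 : ℤ) : ℝ) * Real.sin θ := by
      push_cast; linarith
    obtain ⟨e1, e2⟩ := stmt5_inj θ hc.ne' hθ _ _ _ _ hE
    refine ⟨by rw [e1, e2]; push_cast; ring, by rw [e1, e2]; push_cast; ring⟩
end

section
/- Let θ₁, θ₂, θ₃ be real numbers that are linearly independent over ℚ (no nontrivial integer relation a₁θ₁ + a₂θ₂ + a₃θ₃ = 0). Then the set {(tθ₁ mod 1, tθ₂ mod 1, tθ₃ mod 1) : t ∈ ℝ} is dense in the torus [0,1)³. -/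
noncomputable section KroneckerAux


noncomputable def d3 (x y : Fin 3 → ℝ) : ℝ := x 0 * y 0 + x 1 * y 1 + x 2 * y 2
noncomputable def c3 (x y : Fin 3 → ℝ) : Fin 3 → ℝ :=
  ![x 1 * y 2 - x 2 * y 1, x 2 * y 0 - x 0 * y 2, x 0 * y 1 - x 1 * y 0]

lemma c3_0 (x y : Fin 3 → ℝ) : c3 x y 0 = x 1 * y 2 - x 2 * y 1 := rfl
lemma c3_1 (x y : Fin 3 → ℝ) : c3 x y 1 = x 2 * y 0 - x 0 * y 2 := rfl
lemma c3_2 (x y : Fin 3 → ℝ) : c3 x y 2 = x 0 * y 1 - x 1 * y 0 := rfl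

lemma lagrange (x y : Fin 3 → ℝ) :
    d3 (c3 x y) (c3 x y) + (d3 x y)^2 = d3 x x * d3 y y := by
  simp only [d3, c3_0, c3_1, c3_2]; ring

lemma d3_cross_left (x y : Fin 3 → ℝ) : d3 x (c3 x y) = 0 := by
  simp only [d3, c3_0, c3_1, c3_2]; ring

lemma d3_cross_right (x y : Fin 3 → ℝ) : d3 y (c3 x y) = 0 := by
  simp only [d3, c3_0, c3_1, c3_2]; ring

lemma baccab0 (a b c : Fin 3 → ℝ) :
    c3 a (c3 b c) 0 = (d3 a c) * b 0 - (d3 a b) * c 0 := by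
  simp only [d3, c3_0, c3_1, c3_2]; ring
lemma baccab1 (a b c : Fin 3 → ℝ) :
    c3 a (c3 b c) 1 = (d3 a c) * b 1 - (d3 a b) * c 1 := by
  simp only [d3, c3_0, c3_1, c3_2]; ring
lemma baccab2 (a b c : Fin 3 → ℝ) :
    c3 a (c3 b c) 2 = (d3 a c) * b 2 - (d3 a b) * c 2 := by
  simp only [d3, c3_0, c3_1, c3_2]; ring

lemma sumsq_zero {x : Fin 3 → ℝ} (hx : d3 x x = 0) : x = 0 := by
  simp only [d3] at hx
  have h0 : x 0 = 0 := by nlinarith [sq_nonneg (x 0), sq_nonneg (x 1), sq_nonneg (x 2)]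
  have h1 : x 1 = 0 := by nlinarith [sq_nonneg (x 0), sq_nonneg (x 1), sq_nonneg (x 2)]
  have h2 : x 2 = 0 := by nlinarith [sq_nonneg (x 0), sq_nonneg (x 1), sq_nonneg (x 2)]
  funext i; fin_cases i <;> assumption

lemma d3_nonneg (x : Fin 3 → ℝ) : 0 ≤ d3 x x := by
  simp only [d3]; nlinarith [sq_nonneg (x 0), sq_nonneg (x 1), sq_nonneg (x 2)]

lemma d3_pos {x : Fin 3 → ℝ} (hx : x ≠ 0) : 0 < d3 x x :=
  lt_of_le_of_ne (d3_nonneg x) (fun he => hx (sumsq_zero he.symm))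

-- orth to three ⇒ zero
lemma orth_three {θ u r : Fin 3 → ℝ} (hθ : θ ≠ 0) (hu : u ≠ 0)
    (h1 : d3 r θ = 0) (h2 : d3 r u = 0) (h3 : d3 r (c3 θ u) = 0)
    (hn : c3 θ u ≠ 0) : r = 0 := by
  set n := c3 θ u with hndef
  have e0 : c3 r n 0 = 0 := by rw [hndef, baccab0, h1, h2]; ring
  have e1 : c3 r n 1 = 0 := by rw [hndef, baccab1, h1, h2]; ring
  have e2 : c3 r n 2 = 0 := by rw [hndef, baccab2, h1, h2]; ring
  have hX : d3 (c3 r n) (c3 r n) = 0 := by simp only [d3, e0, e1, e2]; ring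
  have hl := lagrange r n
  rw [hX, h3] at hl
  have : d3 r r * d3 n n = 0 := by linarith [hl]
  rcases mul_eq_zero.1 this with hr | hnn
  · exact sumsq_zero hr
  · exact absurd (sumsq_zero hnn) hn


def icast3 (a : Fin 3 → ℤ) : Fin 3 → ℝ := fun i => (a i : ℝ)

lemma d3_comm (x y : Fin 3 → ℝ) : d3 x y = d3 y x := by simp only [d3]; ring
lemma d3_add_left (x y z : Fin 3 → ℝ) : d3 (x + y) z = d3 x z + d3 y z := by
  simp only [d3, Pi.add_apply]; ring
lemma d3_sub_left (x y z : Fin 3 → ℝ) : d3 (x - y) z = d3 x z - d3 y z := by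
  simp only [d3, Pi.sub_apply]; ring
lemma d3_smul_left (c : ℝ) (x z : Fin 3 → ℝ) : d3 (c • x) z = c * d3 x z := by
  simp only [d3, Pi.smul_apply, smul_eq_mul]; ring

def Hs (θv : Fin 3 → ℝ) : AddSubgroup (Fin 3 → ℝ) where
  carrier := {x | ∃ (t : ℝ) (a : Fin 3 → ℤ), x = t • θv + icast3 a}
  zero_mem' := ⟨0, 0, by funext i; simp [icast3]⟩
  add_mem' := by
    rintro x y ⟨t, a, rfl⟩ ⟨s, b, rfl⟩
    exact ⟨t + s, a + b, by
      funext i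
      simp only [Pi.add_apply, Pi.smul_apply, smul_eq_mul, icast3, Int.cast_add]
      ring⟩
  neg_mem' := by
    rintro x ⟨t, a, rfl⟩
    exact ⟨-t, -a, by
      funext i
      simp only [Pi.neg_apply, Pi.add_apply, Pi.smul_apply, smul_eq_mul, icast3, Int.cast_neg]
      ring⟩

def Cs (θv : Fin 3 → ℝ) : AddSubgroup (Fin 3 → ℝ) := (Hs θv).topologicalClosure

lemma Cs_closed (θv : Fin 3 → ℝ) : IsClosed ((Cs θv : Set (Fin 3 → ℝ))) :=
  AddSubgroup.isClosed_topologicalClosure _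

lemma smul_theta_mem (θv : Fin 3 → ℝ) (t : ℝ) : t • θv ∈ Cs θv :=
  (Hs θv).le_topologicalClosure ⟨t, 0, by funext i; simp [icast3]⟩

lemma icast_mem (θv : Fin 3 → ℝ) (a : Fin 3 → ℤ) : icast3 a ∈ Cs θv :=
  (Hs θv).le_topologicalClosure ⟨0, a, by funext i; simp [icast3]⟩

def pr3 (θv x : Fin 3 → ℝ) : Fin 3 → ℝ := x - (d3 x θv / d3 θv θv) • θv

lemma pr3_mem (θv : Fin 3 → ℝ) {x : Fin 3 → ℝ} (hx : x ∈ Cs θv) : pr3 θv x ∈ Cs θv :=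
  AddSubgroup.sub_mem _ hx (smul_theta_mem θv _)

lemma d3_pr3 (θv : Fin 3 → ℝ) (hθ : d3 θv θv ≠ 0) (x : Fin 3 → ℝ) :
    d3 (pr3 θv x) θv = 0 := by
  simp only [pr3, d3_sub_left, d3_smul_left]
  field_simp
  ring

lemma pr3_smul_theta (θv : Fin 3 → ℝ) (hθ : d3 θv θv ≠ 0) (t : ℝ) :
    pr3 θv (t • θv) = 0 := by
  simp only [pr3, d3_smul_left]
  rw [mul_div_assoc, div_self hθ, mul_one, sub_self]

lemma pr3_add (θv x y : Fin 3 → ℝ) : pr3 θv (x + y) = pr3 θv x + pr3 θv y := by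
  simp only [pr3, d3_add_left, add_smul]
  abel_nf
  rw [add_div, add_smul]
  abel



variable (θv : Fin 3 → ℝ)

lemma d3_abs_le (x : Fin 3 → ℝ) :
    |d3 x θv| ≤ ‖x‖ * (|θv 0| + |θv 1| + |θv 2|) := by
  have h0 : |x 0| ≤ ‖x‖ := by simpa [Real.norm_eq_abs] using norm_le_pi_norm x 0
  have h1 : |x 1| ≤ ‖x‖ := by simpa [Real.norm_eq_abs] using norm_le_pi_norm x 1
  have h2 : |x 2| ≤ ‖x‖ := by simpa [Real.norm_eq_abs] using norm_le_pi_norm x 2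
  have t1 : |d3 x θv| ≤ |x 0 * θv 0| + |x 1 * θv 1| + |x 2 * θv 2| := by
    simp only [d3]
    calc |x 0 * θv 0 + x 1 * θv 1 + x 2 * θv 2|
        ≤ |x 0 * θv 0 + x 1 * θv 1| + |x 2 * θv 2| := abs_add_le _ _
      _ ≤ |x 0 * θv 0| + |x 1 * θv 1| + |x 2 * θv 2| := by
          have := abs_add_le (x 0 * θv 0) (x 1 * θv 1); linarith
  have e0 : |x 0 * θv 0| ≤ ‖x‖ * |θv 0| := by
    rw [abs_mul]; exact mul_le_mul_of_nonneg_right h0 (abs_nonneg _)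
  have e1 : |x 1 * θv 1| ≤ ‖x‖ * |θv 1| := by
    rw [abs_mul]; exact mul_le_mul_of_nonneg_right h1 (abs_nonneg _)
  have e2 : |x 2 * θv 2| ≤ ‖x‖ * |θv 2| := by
    rw [abs_mul]; exact mul_le_mul_of_nonneg_right h2 (abs_nonneg _)
  nlinarith

lemma theta_norm_le : ‖θv‖ ≤ |θv 0| + |θv 1| + |θv 2| := by
  have h0 := abs_nonneg (θv 0); have h1 := abs_nonneg (θv 1); have h2 := abs_nonneg (θv 2)
  have e0 : |θv 0| ≤ |θv 0| + |θv 1| + |θv 2| := by linarith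
  have e1 : |θv 1| ≤ |θv 0| + |θv 1| + |θv 2| := by linarith
  have e2 : |θv 2| ≤ |θv 0| + |θv 1| + |θv 2| := by linarith
  apply pi_norm_le_iff_of_nonneg (by linarith) |>.2
  intro i
  fin_cases i
  · exact e0
  · exact e1
  · exact e2

lemma pr3_norm_le (hθ : 0 < d3 θv θv) (x : Fin 3 → ℝ) :
    ‖pr3 θv x‖ ≤ (1 + (|θv 0| + |θv 1| + |θv 2|) * (|θv 0| + |θv 1| + |θv 2|) / d3 θv θv) * ‖x‖ := by
  set S := |θv 0| + |θv 1| + |θv 2| with hS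
  have hS0 : 0 ≤ S := by
    have h0 := abs_nonneg (θv 0); have h1 := abs_nonneg (θv 1); have h2 := abs_nonneg (θv 2)
    simp only [hS]; linarith
  have h1 : ‖pr3 θv x‖ ≤ ‖x‖ + |d3 x θv / d3 θv θv| * ‖θv‖ := by
    calc ‖pr3 θv x‖ ≤ ‖x‖ + ‖(d3 x θv / d3 θv θv) • θv‖ := norm_sub_le _ _
      _ = ‖x‖ + |d3 x θv / d3 θv θv| * ‖θv‖ := by rw [norm_smul, Real.norm_eq_abs]
  have h2 : |d3 x θv / d3 θv θv| ≤ ‖x‖ * S / d3 θv θv := by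
    rw [abs_div, abs_of_pos hθ]
    exact (div_le_div_iff_of_pos_right hθ).2 (d3_abs_le θv x)
  have h3 : ‖θv‖ ≤ S := theta_norm_le θv
  have hx0 : (0:ℝ) ≤ ‖x‖ := norm_nonneg x
  have h4 : |d3 x θv / d3 θv θv| * ‖θv‖ ≤ (‖x‖ * S / d3 θv θv) * S := by
    apply mul_le_mul h2 h3 (norm_nonneg _)
    positivity
  have : (‖x‖ * S / d3 θv θv) * S = (S * S / d3 θv θv) * ‖x‖ := by ring
  rw [this] at h4
  calc ‖pr3 θv x‖ ≤ ‖x‖ + |d3 x θv / d3 θv θv| * ‖θv‖ := h1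
    _ ≤ ‖x‖ + (S * S / d3 θv θv) * ‖x‖ := by linarith
    _ = (1 + S * S / d3 θv θv) * ‖x‖ := by ring



section WithRel
variable {θv : Fin 3 → ℝ}
variable (hrel : ∀ a : Fin 3 → ℤ, d3 (icast3 a) θv = 0 → a = 0)
include hrel

lemma theta0_ne : θv 0 ≠ 0 := by
  intro h0
  have := hrel ![1, 0, 0] (by simp [d3, icast3, h0])
  have h1 := congrFun this 0
  simp at h1

lemma theta_ne : θv ≠ 0 := fun h => theta0_ne hrel (by rw [h]; rfl)

lemma dtt_pos : 0 < d3 θv θv := d3_pos (theta_ne hrel)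

lemma pr3_icast_eq_zero {a : Fin 3 → ℤ} (hp : pr3 θv (icast3 a) = 0) : a = 0 := by
  set s := d3 (icast3 a) θv / d3 θv θv with hs
  have hca : icast3 a = s • θv := by
    simpa [pr3, sub_eq_zero] using hp
  have ha0 : (a 0 : ℝ) = s * θv 0 := by
    have := congrFun hca 0; simpa [icast3] using this
  have ha1 : (a 1 : ℝ) = s * θv 1 := by
    have := congrFun hca 1; simpa [icast3] using this
  have ha2 : (a 2 : ℝ) = s * θv 2 := by
    have := congrFun hca 2; simpa [icast3] using this
  have hb : (![-(a 1), a 0, 0] : Fin 3 → ℤ) = 0 := by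
    apply hrel
    show ((-(a 1) : ℤ) : ℝ) * θv 0 + ((a 0 : ℤ) : ℝ) * θv 1 + ((0 : ℤ) : ℝ) * θv 2 = 0
    push_cast
    rw [ha0, ha1]; ring
  have hc : (![-(a 2), 0, a 0] : Fin 3 → ℤ) = 0 := by
    apply hrel
    show ((-(a 2) : ℤ) : ℝ) * θv 0 + ((0 : ℤ) : ℝ) * θv 1 + ((a 0 : ℤ) : ℝ) * θv 2 = 0
    push_cast
    rw [ha0, ha2]; ring
  have e1 : a 1 = 0 := by have := congrFun hb 0; simpa using this
  have e0 : a 0 = 0 := by have := congrFun hb 1; simpa using this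
  have e2 : a 2 = 0 := by have := congrFun hc 0; simpa using this
  funext i; fin_cases i
  · exact e0
  · exact e1
  · exact e2

lemma small_elements : ∀ ε : ℝ, 0 < ε →
    ∃ d : Fin 3 → ℝ, d ∈ Cs θv ∧ d3 d θv = 0 ∧ d ≠ 0 ∧ ‖d‖ < ε := by
  intro ε hε
  have hθθ : 0 < d3 θv θv := dtt_pos hrel
  have hθ0 : θv 0 ≠ 0 := theta0_ne hrel
  set K : ℝ := 1 + (|θv 0| + |θv 1| + |θv 2|) * (|θv 0| + |θv 1| + |θv 2|) / d3 θv θv with hK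
  have hKpos : 0 < K := by
    have : 0 ≤ (|θv 0| + |θv 1| + |θv 2|) * (|θv 0| + |θv 1| + |θv 2|) / d3 θv θv := by positivity
    simp only [hK]; linarith
  set δ : ℝ := min (ε / K) |θv 0| with hδ
  have hδpos : 0 < δ := lt_min (div_pos hε hKpos) (abs_pos.2 hθ0)
  set hsq : ℕ → (Fin 3 → ℝ) := fun n => fun i => Int.fract ((n : ℝ) * θv i) with hhsq
  have hmemH : ∀ n : ℕ, hsq n ∈ Hs θv := by
    intro n
    refine ⟨(n : ℝ), fun i => -⌊(n : ℝ) * θv i⌋, ?_⟩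
    funext i
    simp only [hhsq, Pi.add_apply, Pi.smul_apply, smul_eq_mul, icast3, Int.cast_neg, Int.fract]
    ring
  have hball : ∀ n : ℕ, hsq n ∈ Metric.closedBall (0 : Fin 3 → ℝ) 1 := by
    intro n
    rw [Metric.mem_closedBall, dist_zero_right]
    apply pi_norm_le_iff_of_nonneg (by norm_num) |>.2
    intro i
    rw [Real.norm_eq_abs, abs_of_nonneg (Int.fract_nonneg _)]
    exact le_of_lt (Int.fract_lt_one _)
  obtain ⟨v, -, φ, hφ, htend⟩ := (isCompact_closedBall (0 : Fin 3 → ℝ) 1).tendsto_subseq hball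
  obtain ⟨N, hN⟩ := (Metric.tendsto_atTop.1 htend) (δ / 2) (by linarith)
  set k := φ N with hk
  set l := φ (N + 1) with hl
  have hkl : k < l := hφ (by omega)
  have hdist : dist (hsq l) (hsq k) < δ := by
    have h1 := hN N (le_refl N)
    have h2 := hN (N + 1) (by omega)
    calc dist (hsq l) (hsq k) ≤ dist (hsq l) v + dist (hsq k) v := dist_triangle_right _ _ _
      _ < δ / 2 + δ / 2 := add_lt_add h2 h1
      _ = δ := by ring
  set w : Fin 3 → ℝ := hsq l - hsq k with hw
  have hwnorm : ‖w‖ < δ := by rwa [hw, ← dist_eq_norm]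
  set a : Fin 3 → ℤ := fun i => ⌊(k : ℝ) * θv i⌋ - ⌊(l : ℝ) * θv i⌋ with ha
  have hwdecomp : w = ((l : ℝ) - (k : ℝ)) • θv + icast3 a := by
    funext i
    simp only [hw, hhsq, Pi.sub_apply, Pi.add_apply, Pi.smul_apply, smul_eq_mul, icast3, ha,
      Int.fract, Int.cast_sub]
    ring
  refine ⟨pr3 θv w, ?_, d3_pr3 θv (ne_of_gt hθθ) w, ?_, ?_⟩
  · exact pr3_mem θv (AddSubgroup.sub_mem _ ((Hs θv).le_topologicalClosure (hmemH l))
      ((Hs θv).le_topologicalClosure (hmemH k)))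
  · intro hzero
    have hpa : pr3 θv (icast3 a) = 0 := by
      have hx : pr3 θv w = pr3 θv (((l : ℝ) - (k : ℝ)) • θv) + pr3 θv (icast3 a) := by
        rw [hwdecomp]; exact pr3_add θv _ _
      rw [hzero, pr3_smul_theta θv (ne_of_gt hθθ)] at hx
      simpa using hx.symm
    have ha0 : a = 0 := pr3_icast_eq_zero hrel hpa
    have hweq : w = ((l : ℝ) - (k : ℝ)) • θv := by
      rw [hwdecomp, ha0]
      funext i; simp [icast3]
    have h1 : |(l : ℝ) - (k : ℝ)| * |θv 0| ≤ ‖w‖ := by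
      rw [hweq]
      simpa [Real.norm_eq_abs, abs_mul] using norm_le_pi_norm (((l : ℝ) - (k : ℝ)) • θv) 0
    have h2 : (1 : ℝ) ≤ (l : ℝ) - (k : ℝ) := by
      have : (k : ℝ) + 1 ≤ (l : ℝ) := by exact_mod_cast Nat.succ_le_of_lt hkl
      linarith
    have h3 : |θv 0| ≤ |(l : ℝ) - (k : ℝ)| * |θv 0| := by
      rw [abs_of_nonneg (by linarith : (0:ℝ) ≤ (l : ℝ) - (k : ℝ))]
      nlinarith [abs_nonneg (θv 0)]
    have h4 : δ ≤ |θv 0| := min_le_right _ _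
    linarith
  · have hb := pr3_norm_le θv hθθ w
    have h5 : K * ‖w‖ < K * δ := mul_lt_mul_of_pos_left hwnorm hKpos
    have h6 : K * δ ≤ ε := by
      have hle : δ ≤ ε / K := min_le_left _ _
      calc K * δ ≤ K * (ε / K) := mul_le_mul_of_nonneg_left hle (le_of_lt hKpos)
        _ = ε := by field_simp
    calc ‖pr3 θv w‖ ≤ K * ‖w‖ := by rw [hK]; exact hb
      _ < K * δ := h5
      _ ≤ ε := h6

lemma exists_line : ∃ u : Fin 3 → ℝ, d3 u θv = 0 ∧ ‖u‖ = 1 ∧ ∀ t : ℝ, t • u ∈ Cs θv := by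
  have hsmall : ∀ k : ℕ, ∃ d : Fin 3 → ℝ,
      d ∈ Cs θv ∧ d3 d θv = 0 ∧ d ≠ 0 ∧ ‖d‖ < 1 / (k + 1) := by
    intro k
    exact small_elements hrel (1 / (k + 1)) (by positivity)
  choose d hdC hdθ hdne hdnorm using hsmall
  set uk : ℕ → (Fin 3 → ℝ) := fun k => (‖d k‖)⁻¹ • d k with huk
  have hdnz : ∀ k, ‖d k‖ ≠ 0 := fun k => norm_ne_zero_iff.2 (hdne k)
  have hukn : ∀ k, ‖uk k‖ = 1 := by
    intro k
    rw [huk]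
    simp only [norm_smul, Real.norm_eq_abs, abs_inv, abs_norm]
    exact inv_mul_cancel₀ (hdnz k)
  have hsph : ∀ k, uk k ∈ Metric.sphere (0 : Fin 3 → ℝ) 1 := by
    intro k
    rw [Metric.mem_sphere, dist_zero_right]
    exact hukn k
  obtain ⟨u, husph, φ, hφ, htend⟩ :=
    (isCompact_sphere (0 : Fin 3 → ℝ) 1).tendsto_subseq hsph
  have hun : ‖u‖ = 1 := by
    rw [Metric.mem_sphere, dist_zero_right] at husph
    exact husph
  have hcont : Continuous (fun x : Fin 3 → ℝ => d3 x θv) := by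
    simp only [d3]
    fun_prop
  have huθ : d3 u θv = 0 := by
    have h1 : Filter.Tendsto (fun k => d3 ((uk ∘ φ) k) θv) Filter.atTop (nhds (d3 u θv)) :=
      (hcont.tendsto u).comp htend
    have h2 : ∀ k, d3 ((uk ∘ φ) k) θv = 0 := by
      intro k
      simp only [Function.comp, huk, d3_smul_left, hdθ, mul_zero]
    rw [show (fun k => d3 ((uk ∘ φ) k) θv) = fun _ => (0:ℝ) from funext h2] at h1
    exact (tendsto_nhds_unique tendsto_const_nhds h1).symm
  refine ⟨u, huθ, hun, ?_⟩
  intro t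
  set w : ℕ → (Fin 3 → ℝ) := fun k => ⌊t / ‖d (φ k)‖⌋ • d (φ k) with hwdef
  have hwmem : ∀ k, w k ∈ Cs θv := fun k => AddSubgroup.zsmul_mem _ (hdC (φ k)) _
  have hrpos : ∀ k, 0 < ‖d (φ k)‖ := fun k => (hdnz (φ k)).symm.lt_of_le (norm_nonneg _)
  have hbound : ∀ k, ‖w k - t • u‖ ≤ ‖d (φ k)‖ + |t| * ‖uk (φ k) - u‖ := by
    intro k
    set r := ‖d (φ k)‖ with hr
    set m : ℤ := ⌊t / r⌋ with hm
    have hduk : d (φ k) = r • uk (φ k) := by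
      rw [huk, smul_smul, mul_inv_cancel₀ (hdnz (φ k)), one_smul]
    have hwk : w k = ((m : ℝ) * r) • uk (φ k) := by
      have e : ((m : ℝ) * r) • uk (φ k) = m • d (φ k) := by
        rw [mul_smul, ← hduk, Int.cast_smul_eq_zsmul]
      rw [e, hwdef]
    have hsplit : w k - t • u = ((m : ℝ) * r - t) • uk (φ k) + t • (uk (φ k) - u) := by
      rw [hwk, sub_smul, smul_sub]
      abel
    have hmr : |(m : ℝ) * r - t| ≤ r := by
      have hfl : (m : ℝ) ≤ t / r := Int.floor_le _
      have hfu : t / r < (m : ℝ) + 1 := Int.lt_floor_add_one _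
      have h1 : (m : ℝ) * r ≤ t := by
        have := mul_le_mul_of_nonneg_right hfl (le_of_lt (hrpos k))
        rwa [div_mul_cancel₀ _ (hdnz (φ k))] at this
      have h2 : t < ((m : ℝ) + 1) * r := by
        have := mul_lt_mul_of_pos_right hfu (hrpos k)
        rwa [div_mul_cancel₀ _ (hdnz (φ k))] at this
      rw [abs_sub_comm, abs_of_nonneg (by linarith)]
      nlinarith
    calc ‖w k - t • u‖ ≤ ‖((m : ℝ) * r - t) • uk (φ k)‖ + ‖t • (uk (φ k) - u)‖ := by
          rw [hsplit]; exact norm_add_le _ _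
      _ ≤ r + |t| * ‖uk (φ k) - u‖ := by
          have e1 : ‖((m : ℝ) * r - t) • uk (φ k)‖ ≤ r := by
            rw [norm_smul, Real.norm_eq_abs, hukn (φ k), mul_one]
            exact hmr
          have e2 : ‖t • (uk (φ k) - u)‖ = |t| * ‖uk (φ k) - u‖ := by
            rw [norm_smul, Real.norm_eq_abs]
          rw [e2]
          exact add_le_add e1 le_rfl
  have hg1 : Filter.Tendsto (fun k : ℕ => ‖d (φ k)‖) Filter.atTop (nhds 0) := by
    apply squeeze_zero (fun k => norm_nonneg _) (fun k => ?_)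
      (tendsto_one_div_add_atTop_nhds_zero_nat)
    have hk : (k : ℝ) + 1 ≤ (φ k : ℝ) + 1 := by
      have h : k ≤ φ k := hφ.le_apply
      have : (k:ℝ) ≤ (φ k : ℝ) := by exact_mod_cast h
      linarith
    calc ‖d (φ k)‖ ≤ 1 / ((φ k : ℝ) + 1) := le_of_lt (hdnorm (φ k))
      _ ≤ 1 / ((k : ℝ) + 1) := by
          apply one_div_le_one_div_of_le (by positivity) hk
  have hg2 : Filter.Tendsto (fun k : ℕ => |t| * ‖uk (φ k) - u‖) Filter.atTop (nhds 0) := by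
    have := tendsto_iff_norm_sub_tendsto_zero.1 htend
    simpa using this.const_mul |t|
  have hg : Filter.Tendsto (fun k : ℕ => ‖d (φ k)‖ + |t| * ‖uk (φ k) - u‖)
      Filter.atTop (nhds 0) := by
    simpa using hg1.add hg2
  have hwt : Filter.Tendsto w Filter.atTop (nhds (t • u)) := by
    apply tendsto_iff_norm_sub_tendsto_zero.2
    exact squeeze_zero (fun k => norm_nonneg _) hbound hg
  exact (Cs_closed θv).mem_of_tendsto hwt (Filter.Eventually.of_forall hwmem)

end WithRel

end KroneckerAux



theorem stmt6 (θ₁ θ₂ θ₃ : ℝ)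
    (h : ∀ a₁ a₂ a₃ : ℤ, (a₁ : ℝ) * θ₁ + (a₂ : ℝ) * θ₂ + (a₃ : ℝ) * θ₃ = 0 →
      a₁ = 0 ∧ a₂ = 0 ∧ a₃ = 0) :
    ∀ y₁ y₂ y₃ : ℝ, ∀ ε : ℝ, 0 < ε →
      ∃ t : ℝ, ∃ k₁ k₂ k₃ : ℤ,
        |t * θ₁ - y₁ - k₁| < ε ∧ |t * θ₂ - y₂ - k₂| < ε ∧ |t * θ₃ - y₃ - k₃| < ε := by
  intro y₁ y₂ y₃ ε hε
  set θv : Fin 3 → ℝ := ![θ₁, θ₂, θ₃] with hθv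
  have hrel : ∀ a : Fin 3 → ℤ, d3 (icast3 a) θv = 0 → a = 0 := by
    intro a ha
    have ha' : (a 0 : ℝ) * θ₁ + (a 1 : ℝ) * θ₂ + (a 2 : ℝ) * θ₃ = 0 := ha
    obtain ⟨e0, e1, e2⟩ := h (a 0) (a 1) (a 2) ha'
    funext i; fin_cases i
    · exact e0
    · exact e1
    · exact e2
  have hθθ : 0 < d3 θv θv := dtt_pos hrel
  obtain ⟨u, huθ, hun, hline⟩ := exists_line hrel
  have hune : u ≠ 0 := by
    intro h0; rw [h0] at hun; simp at hun
  have hθu : d3 θv u = 0 := by rw [d3_comm]; exact huθ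
  set n : Fin 3 → ℝ := c3 θv u with hn
  have hθn : d3 θv n = 0 := d3_cross_left θv u
  have hun' : d3 u n = 0 := d3_cross_right θv u
  have hnθ : d3 n θv = 0 := by rw [d3_comm]; exact hθn
  have hnu : d3 n u = 0 := by rw [d3_comm]; exact hun'
  have hnn_pos : 0 < d3 n n := by
    have hl := lagrange θv u
    have huu : 0 < d3 u u := d3_pos hune
    have he : d3 n n = d3 θv θv * d3 u u := by
      rw [hθu] at hl
      simpa [hn] using hl
    rw [he]
    exact mul_pos hθθ huu
  have hne : n ≠ 0 := by
    intro h0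
    rw [h0] at hnn_pos
    simp [d3] at hnn_pos
  -- subgroup of ℝ generated by the coordinates of n
  set G : AddSubgroup ℝ :=
    { carrier := {r | ∃ a : Fin 3 → ℤ,
        r = (a 0 : ℝ) * n 0 + (a 1 : ℝ) * n 1 + (a 2 : ℝ) * n 2}
      zero_mem' := ⟨0, by simp⟩
      add_mem' := by
        rintro r s ⟨a, rfl⟩ ⟨b, rfl⟩
        exact ⟨a + b, by push_cast [Pi.add_apply]; ring⟩
      neg_mem' := by
        rintro r ⟨a, rfl⟩
        exact ⟨-a, by push_cast [Pi.neg_apply]; ring⟩ } with hG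
  have hGdense : Dense (G : Set ℝ) := by
    rcases G.dense_or_cyclic with hd | ⟨c, hc⟩
    · exact hd
    · exfalso
      have hm0 : n 0 ∈ G := ⟨![1, 0, 0], by show n 0 = ((1:ℤ):ℝ) * n 0 + ((0:ℤ):ℝ) * n 1 + ((0:ℤ):ℝ) * n 2; push_cast; ring⟩
      have hm1 : n 1 ∈ G := ⟨![0, 1, 0], by show n 1 = ((0:ℤ):ℝ) * n 0 + ((1:ℤ):ℝ) * n 1 + ((0:ℤ):ℝ) * n 2; push_cast; ring⟩
      have hm2 : n 2 ∈ G := ⟨![0, 0, 1], by show n 2 = ((0:ℤ):ℝ) * n 0 + ((0:ℤ):ℝ) * n 1 + ((1:ℤ):ℝ) * n 2; push_cast; ring⟩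
      rw [hc] at hm0 hm1 hm2
      obtain ⟨k0, hk0⟩ := AddSubgroup.mem_closure_singleton.1 hm0
      obtain ⟨k1, hk1⟩ := AddSubgroup.mem_closure_singleton.1 hm1
      obtain ⟨k2, hk2⟩ := AddSubgroup.mem_closure_singleton.1 hm2
      rw [zsmul_eq_mul] at hk0 hk1 hk2
      by_cases hc0 : c = 0
      · apply hne
        have z0 : n 0 = 0 := by rw [← hk0, hc0]; simp
        have z1 : n 1 = 0 := by rw [← hk1, hc0]; simp
        have z2 : n 2 = 0 := by rw [← hk2, hc0]; simp
        funext i; fin_cases i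
        · exact z0
        · exact z1
        · exact z2
      · have hsum : c * ((k0 : ℝ) * θ₁ + (k1 : ℝ) * θ₂ + (k2 : ℝ) * θ₃) = 0 := by
          have : d3 n θv = n 0 * θ₁ + n 1 * θ₂ + n 2 * θ₃ := rfl
          rw [this] at hnθ
          rw [← hk0, ← hk1, ← hk2] at hnθ
          linarith [hnθ]
        have hz : (k0 : ℝ) * θ₁ + (k1 : ℝ) * θ₂ + (k2 : ℝ) * θ₃ = 0 :=
          (mul_eq_zero.1 hsum).resolve_left hc0
        obtain ⟨e0, e1, e2⟩ := h k0 k1 k2 hz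
        apply hne
        have z0 : n 0 = 0 := by rw [← hk0, e0]; simp
        have z1 : n 1 = 0 := by rw [← hk1, e1]; simp
        have z2 : n 2 = 0 := by rw [← hk2, e2]; simp
        funext i; fin_cases i
        · exact z0
        · exact z1
        · exact z2
  -- every vector orthogonal to θv lies in Cs θv
  have hKsub : ∀ w : Fin 3 → ℝ, d3 w θv = 0 → w ∈ Cs θv := by
    intro w hw
    have hclosed := Cs_closed θv
    suffices hcl : w ∈ closure ((Cs θv : Set (Fin 3 → ℝ))) by
      rw [hclosed.closure_eq] at hcl
      exact hcl
    rw [Metric.mem_closure_iff]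
    intro ε' hε'
    set Sn : ℝ := |n 0| + |n 1| + |n 2| with hSn
    have hSn0 : 0 ≤ Sn := by
      have := abs_nonneg (n 0); have := abs_nonneg (n 1); have := abs_nonneg (n 2)
      simp only [hSn]; linarith
    set ε'' : ℝ := ε' * d3 n n / (Sn + 1) with hε''
    have hε''pos : 0 < ε'' := by
      rw [hε'']
      have : 0 < Sn + 1 := by linarith
      positivity
    obtain ⟨g, hgG, hgd⟩ := Metric.mem_closure_iff.1 (hGdense (d3 w n)) ε'' hε''pos
    obtain ⟨a, hga⟩ := hgG
    have hg_eq : g = d3 (icast3 a) n := by rw [hga]; rfl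
    set q : ℝ := d3 (icast3 a) θv / d3 θv θv with hq
    set cu : ℝ := (d3 w u - d3 (icast3 a) u) / d3 u u with hcu
    set Δ : ℝ := d3 w n - d3 (icast3 a) n with hΔ
    set z : Fin 3 → ℝ := pr3 θv (icast3 a) + cu • u with hz
    have hz_mem : z ∈ Cs θv := AddSubgroup.add_mem _ (pr3_mem θv (icast_mem θv a)) (hline cu)
    have huu : 0 < d3 u u := d3_pos hune
    have hr : w - z - (Δ / d3 n n) • n = 0 := by
      apply orth_three (θ := θv) (u := u) (theta_ne hrel) hune ?_ ?_ ?_ (hn ▸ hne)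
      · show d3 (w - z - (Δ / d3 n n) • n) θv = 0
        rw [hz]
        simp only [pr3, d3_sub_left, d3_add_left, d3_smul_left]
        rw [hw, huθ, hnθ]
        field_simp [ne_of_gt hθθ]
        try ring
      · show d3 (w - z - (Δ / d3 n n) • n) u = 0
        rw [hz]
        simp only [pr3, d3_sub_left, d3_add_left, d3_smul_left]
        rw [hθu, hnu, hcu]
        field_simp [ne_of_gt huu]
        try ring
      · show d3 (w - z - (Δ / d3 n n) • n) n = 0
        rw [hz]
        simp only [pr3, d3_sub_left, d3_add_left, d3_smul_left]
        rw [hθn, hun', hΔ]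
        field_simp [ne_of_gt hnn_pos]
        try ring
    have hwz : w - z = (Δ / d3 n n) • n := sub_eq_zero.1 hr
    refine ⟨z, hz_mem, ?_⟩
    rw [dist_eq_norm, hwz, norm_smul, Real.norm_eq_abs]
    have hΔlt : |Δ| < ε'' := by
      rw [hΔ, ← hg_eq, ← Real.dist_eq]
      exact hgd
    have hnle : ‖n‖ ≤ Sn := theta_norm_le n
    have habs : |Δ / d3 n n| = |Δ| / d3 n n := by
      rw [abs_div, abs_of_pos hnn_pos]
    rw [habs]
    calc |Δ| / d3 n n * ‖n‖ ≤ |Δ| / d3 n n * (Sn + 1) := by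
          apply mul_le_mul_of_nonneg_left (by linarith) (by positivity)
      _ < ε'' / d3 n n * (Sn + 1) := by
          apply mul_lt_mul_of_pos_right _ (by linarith : (0:ℝ) < Sn + 1)
          exact (div_lt_div_iff_of_pos_right hnn_pos).2 hΔlt
      _ = ε' := by
          have hd : d3 n n ≠ 0 := ne_of_gt hnn_pos
          have hs : Sn + 1 ≠ 0 := by linarith
          rw [hε'']
          field_simp
  -- conclude
  set yv : Fin 3 → ℝ := ![y₁, y₂, y₃] with hyv
  have hy : yv ∈ Cs θv := by
    have hdec : yv = (d3 yv θv / d3 θv θv) • θv + pr3 θv yv := by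
      simp [pr3]
    rw [hdec]
    exact AddSubgroup.add_mem _ (smul_theta_mem θv _)
      (hKsub _ (d3_pr3 θv (ne_of_gt hθθ) yv))
  have hy' : yv ∈ closure ((Hs θv : Set (Fin 3 → ℝ))) := hy
  obtain ⟨x, hxH, hdist⟩ := Metric.mem_closure_iff.1 hy' ε hε
  obtain ⟨t, a, hx⟩ := hxH
  refine ⟨t, -(a 0), -(a 1), -(a 2), ?_, ?_, ?_⟩
  · have h0 : dist (yv 0) (x 0) ≤ dist yv x := dist_le_pi_dist yv x 0
    have : x 0 = t * θ₁ + (a 0 : ℝ) := by rw [hx]; rfl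
    rw [Real.dist_eq, this] at h0
    have : |t * θ₁ - y₁ - ((-(a 0) : ℤ) : ℝ)| = |y₁ - (t * θ₁ + (a 0 : ℝ))| := by
      push_cast
      rw [abs_sub_comm]
      ring_nf
    rw [this]
    calc |y₁ - (t * θ₁ + (a 0 : ℝ))| ≤ dist yv x := h0
      _ < ε := hdist
  · have h0 : dist (yv 1) (x 1) ≤ dist yv x := dist_le_pi_dist yv x 1
    have : x 1 = t * θ₂ + (a 1 : ℝ) := by rw [hx]; rfl
    rw [Real.dist_eq, this] at h0
    have : |t * θ₂ - y₂ - ((-(a 1) : ℤ) : ℝ)| = |y₂ - (t * θ₂ + (a 1 : ℝ))| := by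
      push_cast
      rw [abs_sub_comm]
      ring_nf
    rw [this]
    calc |y₂ - (t * θ₂ + (a 1 : ℝ))| ≤ dist yv x := h0
      _ < ε := hdist
  · have h0 : dist (yv 2) (x 2) ≤ dist yv x := dist_le_pi_dist yv x 2
    have : x 2 = t * θ₃ + (a 2 : ℝ) := by rw [hx]; rfl
    rw [Real.dist_eq, this] at h0
    have : |t * θ₃ - y₃ - ((-(a 2) : ℤ) : ℝ)| = |y₃ - (t * θ₃ + (a 2 : ℝ))| := by
      push_cast
      rw [abs_sub_comm]
      ring_nf
    rw [this]
    calc |y₃ - (t * θ₃ + (a 2 : ℝ))| ≤ dist yv x := h0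
      _ < ε := hdist
end

section
/- Let θ ∈ ℝ with tan θ irrational, ε > 0, Λ_F = {m·cos θ − n·sin θ : m, n ∈ ℤ, 0 ≤ m·sin θ + n·cos θ < ε}, and Λ = Λ_F × ℤ ⊂ ℝ². Let s ∈ ℝ with s ∉ ℚ·cos θ + ℚ·sin θ, and w = (1, s). Then Λ + wℝ = {(x + t, k + st) : x ∈ Λ_F, k ∈ ℤ, t ∈ ℝ} is dense in ℝ². -/
open Filter Topology Real

lemma mem_closure_triple' {G : Type*} [AddCommGroup G] {a b c : G} {x : G} :
    x ∈ AddSubgroup.closure ({a, b, c} : Set G) ↔ ∃ m n k : ℤ, x = m • a + n • b + k • c := by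
  constructor
  · intro hx
    induction hx using AddSubgroup.closure_induction with
    | mem g hg =>
      rcases hg with rfl | rfl | rfl
      · exact ⟨1, 0, 0, by simp⟩
      · exact ⟨0, 1, 0, by simp⟩
      · exact ⟨0, 0, 1, by simp⟩
    | zero => exact ⟨0, 0, 0, by simp⟩
    | add x y hx hy px py =>
      obtain ⟨m, n, k, rfl⟩ := px
      obtain ⟨m', n', k', rfl⟩ := py
      exact ⟨m + m', n + n', k + k', by simp [add_zsmul]; abel⟩
    | neg x hx px =>
      obtain ⟨m, n, k, rfl⟩ := px
      exact ⟨-m, -n, -k, by simp [neg_zsmul]; abel⟩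
  · rintro ⟨m, n, k, rfl⟩
    have ha : a ∈ AddSubgroup.closure ({a, b, c} : Set G) :=
      AddSubgroup.subset_closure (by simp)
    have hb : b ∈ AddSubgroup.closure ({a, b, c} : Set G) :=
      AddSubgroup.subset_closure (by simp)
    have hc : c ∈ AddSubgroup.closure ({a, b, c} : Set G) :=
      AddSubgroup.subset_closure (by simp)
    exact add_mem (add_mem (AddSubgroup.zsmul_mem _ ha m) (AddSubgroup.zsmul_mem _ hb n))
      (AddSubgroup.zsmul_mem _ hc k)

lemma gamma_sum (θ s : ℝ) (m n k : ℤ) :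
    m • ((Real.sin θ, s * Real.cos θ) : ℝ × ℝ) + n • ((Real.cos θ, -(s * Real.sin θ)) : ℝ × ℝ)
      + k • (((0 : ℝ), (1 : ℝ)) : ℝ × ℝ) =
    ((m : ℝ) * Real.sin θ + (n : ℝ) * Real.cos θ,
     s * ((m : ℝ) * Real.cos θ - (n : ℝ) * Real.sin θ) + (k : ℝ)) := by
  have h : ∀ (j : ℤ) (u v : ℝ), j • ((u, v) : ℝ × ℝ) = ((j : ℝ) * u, (j : ℝ) * v) := by
    intro j u v
    rw [← Int.cast_smul_eq_zsmul ℝ, Prod.smul_mk]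
    simp [smul_eq_mul]
  simp only [h, Prod.mk_add_mk, Prod.mk.injEq]
  constructor <;> ring

lemma dense_gamma (θ s : ℝ) (hθ : Irrational (Real.tan θ))
    (hs : ¬∃ p q : ℚ, s = (p : ℝ) * Real.cos θ + (q : ℝ) * Real.sin θ) :
    Dense ((AddSubgroup.closure ({(Real.sin θ, s * Real.cos θ), (Real.cos θ, -(s * Real.sin θ)),
      ((0 : ℝ), (1 : ℝ))} : Set (ℝ × ℝ)) : AddSubgroup (ℝ × ℝ)) : Set (ℝ × ℝ)) := by
  set Γ : AddSubgroup (ℝ × ℝ) := AddSubgroup.closure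
    ({(Real.sin θ, s * Real.cos θ), (Real.cos θ, -(s * Real.sin θ)),
      ((0 : ℝ), (1 : ℝ))} : Set (ℝ × ℝ)) with hΓdef
  have hΓmem : ∀ m n k : ℤ,
      (((m : ℝ) * Real.sin θ + (n : ℝ) * Real.cos θ,
        s * ((m : ℝ) * Real.cos θ - (n : ℝ) * Real.sin θ) + (k : ℝ)) : ℝ × ℝ) ∈ Γ := by
    intro m n k
    rw [hΓdef]
    exact mem_closure_triple'.2 ⟨m, n, k, (gamma_sum θ s m n k).symm⟩
  -- cos θ ≠ 0
  have hc0 : Real.cos θ ≠ 0 := by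
    intro h
    exact hθ ⟨0, by simp [Real.tan_eq_sin_div_cos, h]⟩
  -- the projection subgroup is dense
  have hD : Dense ((AddSubgroup.closure ({Real.sin θ, Real.cos θ, (0:ℝ)} : Set ℝ) :
      AddSubgroup ℝ) : Set ℝ) := by
    rcases (AddSubgroup.closure ({Real.sin θ, Real.cos θ, (0:ℝ)} : Set ℝ)).dense_or_cyclic with
      h | ⟨a, ha⟩
    · exact h
    · exfalso
      have hsin : Real.sin θ ∈ AddSubgroup.closure ({Real.sin θ, Real.cos θ, (0:ℝ)} : Set ℝ) :=
        AddSubgroup.subset_closure (by simp)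
      have hcos : Real.cos θ ∈ AddSubgroup.closure ({Real.sin θ, Real.cos θ, (0:ℝ)} : Set ℝ) :=
        AddSubgroup.subset_closure (by simp)
      rw [ha, AddSubgroup.mem_closure_singleton] at hsin hcos
      obtain ⟨p, hp⟩ := hsin
      obtain ⟨q, hq⟩ := hcos
      rw [zsmul_eq_mul] at hp hq
      have ha0 : a ≠ 0 := by
        intro h0; rw [h0, mul_zero] at hq; exact hc0 hq.symm
      have hq0 : (q : ℝ) ≠ 0 := by
        intro h0; rw [h0, zero_mul] at hq; exact hc0 hq.symm
      apply hθ
      refine ⟨(p : ℚ) / (q : ℚ), ?_⟩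
      rw [Real.tan_eq_sin_div_cos, ← hp, ← hq]
      push_cast
      rw [mul_comm (p:ℝ) a, mul_comm (q:ℝ) a, mul_div_mul_left _ _ ha0]
  -- pick points with small first coordinate
  have hpick : ∀ i : ℕ, ∃ mm nn : ℤ,
      (mm : ℝ) * Real.sin θ + (nn : ℝ) * Real.cos θ ∈
        Set.Ioo (1 / ((i : ℝ) + 2)) (1 / ((i : ℝ) + 1)) := by
    intro i
    have hlt : (1 : ℝ) / ((i : ℝ) + 2) < 1 / ((i : ℝ) + 1) := by
      have h1 : (0:ℝ) < (i : ℝ) + 1 := by positivity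
      have h2 : ((i : ℝ) + 1) < (i : ℝ) + 2 := by linarith
      exact one_div_lt_one_div_of_lt h1 h2
    obtain ⟨x, hxS, hxI⟩ := hD.exists_mem_open isOpen_Ioo (Set.nonempty_Ioo.2 hlt)
    obtain ⟨mm, nn, kk, rfl⟩ := mem_closure_triple'.1 hxS
    refine ⟨mm, nn, ?_⟩
    simpa [zsmul_eq_mul] using hxI
  choose mseq nseq hmn using hpick
  set y : ℕ → ℝ := fun i => (mseq i : ℝ) * Real.sin θ + (nseq i : ℝ) * Real.cos θ with hydef
  set r : ℕ → ℝ := fun i =>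
    Int.fract (s * ((mseq i : ℝ) * Real.cos θ - (nseq i : ℝ) * Real.sin θ)) with hrdef
  set γ : ℕ → ℝ × ℝ := fun i => (y i, r i) with hγdef
  have hγmem : ∀ i, γ i ∈ Γ := by
    intro i
    have h2 : γ i = ((mseq i : ℝ) * Real.sin θ + (nseq i : ℝ) * Real.cos θ,
        s * ((mseq i : ℝ) * Real.cos θ - (nseq i : ℝ) * Real.sin θ) +
          ((-⌊s * ((mseq i : ℝ) * Real.cos θ - (nseq i : ℝ) * Real.sin θ)⌋ : ℤ) : ℝ)) := by
      rw [hγdef]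
      dsimp only
      congr 1
      have hfr : Int.fract (s * ((mseq i : ℝ) * Real.cos θ - (nseq i : ℝ) * Real.sin θ)) =
          s * ((mseq i : ℝ) * Real.cos θ - (nseq i : ℝ) * Real.sin θ) -
            ((⌊s * ((mseq i : ℝ) * Real.cos θ - (nseq i : ℝ) * Real.sin θ)⌋ : ℤ) : ℝ) := rfl
      rw [hrdef]
      dsimp only
      rw [hfr]
      push_cast
      ring
    rw [h2]
    exact hΓmem _ _ _
  have hrIcc : ∀ i, r i ∈ Set.Icc (0:ℝ) 1 :=
    fun i => ⟨Int.fract_nonneg _, (Int.fract_lt_one _).le⟩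
  obtain ⟨r0, -, φ, hφ, hrconv⟩ := (isCompact_Icc).tendsto_subseq hrIcc
  -- y tends to 0
  have hyto0 : Tendsto y atTop (𝓝 0) := by
    apply squeeze_zero (fun i => (le_of_lt (lt_trans (by positivity) (hmn i).1)))
      (fun i => (hmn i).2.le)
    exact tendsto_one_div_add_atTop_nhds_zero_nat
  set g : ℕ → ℝ × ℝ := fun k => γ (φ (k+1)) - γ (φ k) with hgdef
  have hgΓ : ∀ k, g k ∈ Γ := fun k => sub_mem (hγmem _) (hγmem _)
  have hglt : ∀ k, (g k).1 < 0 := by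
    intro k
    have h1 : y (φ (k+1)) < 1 / ((φ (k+1) : ℝ) + 1) := (hmn (φ (k+1))).2
    have h2 : 1 / ((φ (k) : ℝ) + 2) < y (φ k) := (hmn (φ k)).1
    have h3 : (φ k) + 1 ≤ φ (k+1) := hφ (Nat.lt_succ_self k)
    have h4 : 1 / ((φ (k+1) : ℝ) + 1) ≤ 1 / ((φ (k) : ℝ) + 2) := by
      apply one_div_le_one_div_of_le (by positivity)
      have : ((φ k : ℝ)) + 1 ≤ (φ (k+1) : ℝ) := by exact_mod_cast h3
      linarith
    have : y (φ (k+1)) < y (φ k) := lt_of_lt_of_le h1 (le_trans h4 h2.le)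
    simpa [hgdef] using sub_neg.2 this
  have hgne : ∀ k, g k ≠ 0 := fun k h => (hglt k).ne (by rw [h]; rfl)
  have hgto0 : Tendsto g atTop (𝓝 (0 : ℝ × ℝ)) := by
    have hφt : Tendsto φ atTop atTop := hφ.tendsto_atTop
    have hφt1 : Tendsto (fun k => φ (k+1)) atTop atTop :=
      hφt.comp (tendsto_add_atTop_nat 1)
    have h1 : Tendsto (fun k => (g k).1) atTop (𝓝 0) := by
      have := (hyto0.comp hφt1).sub (hyto0.comp hφt)
      simpa [hgdef, Function.comp] using this
    have h2 : Tendsto (fun k => (g k).2) atTop (𝓝 0) := by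
      have := (hrconv.comp (tendsto_add_atTop_nat 1)).sub hrconv
      simpa [hgdef, Function.comp] using this
    have := h1.prodMk_nhds h2
    exact this
  set a : ℕ → ℝ := fun k => ‖g k‖ with hadef
  have hapos : ∀ k, 0 < a k := fun k => norm_pos_iff.2 (hgne k)
  set d : ℕ → ℝ × ℝ := fun k => (a k)⁻¹ • g k with hddef
  have hdsph : ∀ k, d k ∈ Metric.sphere (0 : ℝ × ℝ) 1 := by
    intro k
    rw [mem_sphere_zero_iff_norm]
    rw [hddef]
    dsimp only
    rw [norm_smul, Real.norm_eq_abs, abs_of_pos (inv_pos.2 (hapos k))]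
    have hga : ‖g k‖ = a k := rfl
    rw [hga]
    exact inv_mul_cancel₀ (hapos k).ne'
  obtain ⟨dstar, hdstar_mem, χ, hχ, hdconv⟩ :=
    (isCompact_sphere (0 : ℝ × ℝ) 1).tendsto_subseq hdsph
  have hdnorm : ‖dstar‖ = 1 := mem_sphere_zero_iff_norm.1 hdstar_mem
  have haχ0 : Tendsto (fun k => a (χ k)) atTop (𝓝 0) := by
    have := (hgto0.comp hχ.tendsto_atTop).norm
    simpa [hadef, Function.comp] using this
  -- the line through dstar lies in the closure
  have hline : ∀ t : ℝ, t • dstar ∈ closure (Γ : Set (ℝ × ℝ)) := by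
    intro t
    set cs : ℕ → ℝ := fun k => ((round (t / a (χ k)) : ℤ) : ℝ) * a (χ k) with hcsdef
    have hcb : ∀ k, |cs k - t| ≤ a (χ k) / 2 := by
      intro k
      have hne := (hapos (χ k)).ne'
      have : cs k - t = (((round (t / a (χ k)) : ℤ) : ℝ) - t / a (χ k)) * a (χ k) := by
        field_simp [hcsdef]
        simp only [hcsdef]
        ring
      rw [this, abs_mul, abs_of_pos (hapos (χ k))]
      have := abs_sub_round (t / a (χ k))
      rw [abs_sub_comm] at this
      nlinarith [hapos (χ k)]
    have hcto : Tendsto cs atTop (𝓝 t) := by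
      rw [← tendsto_sub_nhds_zero_iff]
      have hup : Tendsto (fun k => a (χ k) / 2) atTop (𝓝 0) := by
        simpa using haχ0.div_const 2
      have hlow : Tendsto (fun k => -(a (χ k) / 2)) atTop (𝓝 0) := by
        simpa using hup.neg
      refine tendsto_of_tendsto_of_tendsto_of_le_of_le hlow hup ?_ ?_
      · intro k; linarith [(abs_le.1 (hcb k)).1]
      · intro k; linarith [(abs_le.1 (hcb k)).2]
    have heq : ∀ k, (round (t / a (χ k))) • g (χ k) = cs k • d (χ k) := by
      intro k
      rw [← Int.cast_smul_eq_zsmul ℝ, hcsdef, hddef]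
      rw [smul_smul]
      congr 1
      rw [mul_assoc, mul_inv_cancel₀ (hapos (χ k)).ne', mul_one]
    have hconv2 : Tendsto (fun k => (round (t / a (χ k))) • g (χ k)) atTop (𝓝 (t • dstar)) := by
      have := hcto.smul hdconv
      exact this.congr (fun k => (heq k).symm)
    exact mem_closure_of_tendsto hconv2
      (Filter.Eventually.of_forall (fun k => AddSubgroup.zsmul_mem _ (hgΓ _) _))
  -- endgame
  have hTC : (Γ.topologicalClosure : Set (ℝ × ℝ)) = closure (Γ : Set (ℝ × ℝ)) :=
    AddSubgroup.topologicalClosure_coe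
  intro z
  rw [← closure_closure (s := (Γ : Set (ℝ × ℝ))), Metric.mem_closure_iff]
  intro δ hδ
  by_cases hd1 : dstar.1 = 0
  · -- vertical line case
    have hd2 : dstar.2 ≠ 0 := by
      intro h2
      have hz0 : dstar = 0 := Prod.ext hd1 h2
      rw [hz0] at hdnorm
      simp at hdnorm
    have hvert : ∀ ρ : ℝ, (((0:ℝ), ρ) : ℝ × ℝ) ∈ closure (Γ : Set (ℝ × ℝ)) := by
      intro ρ
      have h := hline (ρ / dstar.2)
      have heq : (ρ / dstar.2) • dstar = (((0:ℝ), ρ) : ℝ × ℝ) := by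
        have hds : dstar = (dstar.1, dstar.2) := rfl
        rw [hds, Prod.smul_mk, hd1]
        simp [smul_eq_mul, div_mul_cancel₀ _ hd2]
      rwa [heq] at h
    obtain ⟨w, hwS, hwI⟩ := hD.exists_mem_open Metric.isOpen_ball
      (Metric.nonempty_ball.2 hδ) (U := Metric.ball z.1 δ)
    obtain ⟨m', n', k', rfl⟩ := mem_closure_triple'.1 hwS
    set yy := (m' : ℝ) * Real.sin θ + (n' : ℝ) * Real.cos θ with hyy
    set xv := (m' : ℝ) * Real.cos θ - (n' : ℝ) * Real.sin θ with hxv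
    have hwval : m' • Real.sin θ + n' • Real.cos θ + k' • (0:ℝ) = yy := by
      simp [zsmul_eq_mul, hyy]
    have hγ1 : ((yy, s * xv + ((0:ℤ):ℝ)) : ℝ × ℝ) ∈ Γ := hΓmem m' n' 0
    have hpt : ((yy, z.2) : ℝ × ℝ) ∈ closure (Γ : Set (ℝ × ℝ)) := by
      have hadd : ((yy, z.2) : ℝ × ℝ)
          = ((yy, s * xv + ((0:ℤ):ℝ)) : ℝ × ℝ) + ((0:ℝ), z.2 - (s * xv + ((0:ℤ):ℝ))) := by
        rw [Prod.mk_add_mk]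
        congr 1 <;> ring
      rw [hadd]
      have h1 : ((yy, s * xv + ((0:ℤ):ℝ)) : ℝ × ℝ) ∈ Γ.topologicalClosure :=
        Γ.le_topologicalClosure hγ1
      have h2 : (((0:ℝ), z.2 - (s * xv + ((0:ℤ):ℝ))) : ℝ × ℝ) ∈ Γ.topologicalClosure := by
        rw [← SetLike.mem_coe, hTC]
        exact hvert _
      have hsum := add_mem h1 h2
      rwa [← SetLike.mem_coe, hTC] at hsum
    refine ⟨(yy, z.2), hpt, ?_⟩
    have hz : z = (z.1, z.2) := rfl
    rw [hwval] at hwI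
    rw [hz, Prod.dist_eq]
    simp only [dist_self]
    have hyd : dist z.1 yy < δ := by
      rw [dist_comm]
      exact Metric.mem_ball.1 hwI
    exact max_lt hyd hδ
  · -- slanted line case
    set c' := dstar.2 / dstar.1 with hc'def
    rcases (AddSubgroup.closure ({s * Real.cos θ - c' * Real.sin θ,
        -(s * Real.sin θ) - c' * Real.cos θ, (1:ℝ)} : Set ℝ)).dense_or_cyclic with hTD | ⟨a0, ha0⟩
    · obtain ⟨τ, hτS, hτI⟩ := hTD.exists_mem_open Metric.isOpen_ball
        (Metric.nonempty_ball.2 hδ) (U := Metric.ball (z.2 - c' * z.1) δ)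
      obtain ⟨m', n', k', rfl⟩ := mem_closure_triple'.1 hτS
      set yy := (m' : ℝ) * Real.sin θ + (n' : ℝ) * Real.cos θ with hyy
      set xv := (m' : ℝ) * Real.cos θ - (n' : ℝ) * Real.sin θ with hxv
      have hτval : m' • (s * Real.cos θ - c' * Real.sin θ)
          + n' • (-(s * Real.sin θ) - c' * Real.cos θ) + k' • (1:ℝ)
          = s * xv + (k' : ℝ) - c' * yy := by
        simp only [zsmul_eq_mul, hyy, hxv]
        ring
      have hγ1 : ((yy, s * xv + (k' : ℝ)) : ℝ × ℝ) ∈ Γ := hΓmem m' n' k'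
      have hlpt := hline ((z.1 - yy) / dstar.1)
      have hlval : ((z.1 - yy) / dstar.1) • dstar = ((z.1 - yy), c' * (z.1 - yy)) := by
        have hds : dstar = (dstar.1, dstar.2) := rfl
        rw [hds, Prod.smul_mk]
        simp only [smul_eq_mul, Prod.mk.injEq]
        constructor
        · field_simp
        · rw [hc'def]
          field_simp
      set pt : ℝ × ℝ := (z.1, s * xv + (k' : ℝ) + c' * (z.1 - yy)) with hptdef
      have hptmem : pt ∈ closure (Γ : Set (ℝ × ℝ)) := by
        have h1 : ((yy, s * xv + (k' : ℝ)) : ℝ × ℝ) ∈ Γ.topologicalClosure :=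
          Γ.le_topologicalClosure hγ1
        have h2 : (((z.1 - yy), c' * (z.1 - yy)) : ℝ × ℝ) ∈ Γ.topologicalClosure := by
          rw [← SetLike.mem_coe, hTC, ← hlval]
          exact hlpt
        have hsum := add_mem h1 h2
        have heq : ((yy, s * xv + (k' : ℝ)) : ℝ × ℝ) + ((z.1 - yy), c' * (z.1 - yy)) = pt := by
          rw [Prod.mk_add_mk, hptdef]
          congr 1
          ring
        rwa [heq, ← SetLike.mem_coe, hTC] at hsum
      refine ⟨pt, hptmem, ?_⟩
      have hz : z = (z.1, z.2) := rfl
      rw [hτval] at hτI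
      have hτd : dist (s * xv + (k' : ℝ) - c' * yy) (z.2 - c' * z.1) < δ :=
        Metric.mem_ball.1 hτI
      rw [hz, hptdef, Prod.dist_eq]
      simp only [dist_self]
      have h2d : dist z.2 (s * xv + (k' : ℝ) + c' * (z.1 - yy))
          = dist (s * xv + (k' : ℝ) - c' * yy) (z.2 - c' * z.1) := by
        rw [Real.dist_eq, Real.dist_eq, abs_sub_comm]
        congr 1
        ring
      rw [h2d]
      exact max_lt hδ hτd
    · -- cyclic case: contradiction with hs
      exfalso
      have h1 : (1:ℝ) ∈ AddSubgroup.closure ({s * Real.cos θ - c' * Real.sin θ,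
          -(s * Real.sin θ) - c' * Real.cos θ, (1:ℝ)} : Set ℝ) :=
        AddSubgroup.subset_closure (by simp)
      have ht1 : s * Real.cos θ - c' * Real.sin θ ∈ AddSubgroup.closure
          ({s * Real.cos θ - c' * Real.sin θ,
            -(s * Real.sin θ) - c' * Real.cos θ, (1:ℝ)} : Set ℝ) :=
        AddSubgroup.subset_closure (by simp)
      have ht2 : -(s * Real.sin θ) - c' * Real.cos θ ∈ AddSubgroup.closure
          ({s * Real.cos θ - c' * Real.sin θ,
            -(s * Real.sin θ) - c' * Real.cos θ, (1:ℝ)} : Set ℝ) :=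
        AddSubgroup.subset_closure (by simp)
      rw [ha0, AddSubgroup.mem_closure_singleton] at h1 ht1 ht2
      obtain ⟨k0, hk0⟩ := h1
      obtain ⟨m1, hm1⟩ := ht1
      obtain ⟨m2, hm2⟩ := ht2
      rw [zsmul_eq_mul] at hk0 hm1 hm2
      have hk00 : (k0 : ℝ) ≠ 0 := by
        intro h
        rw [h, zero_mul] at hk0
        exact one_ne_zero hk0.symm
      have ha00 : a0 = 1 / (k0 : ℝ) := by
        rw [eq_div_iff hk00]
        rw [mul_comm] at hk0
        exact hk0
      apply hs
      refine ⟨(m1 : ℚ) / (k0 : ℚ), -((m2 : ℚ) / (k0 : ℚ)), ?_⟩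
      have e1 : (m1 : ℝ) / (k0 : ℝ) = s * Real.cos θ - c' * Real.sin θ := by
        rw [← hm1, ha00]
        field_simp
      have e2 : (m2 : ℝ) / (k0 : ℝ) = -(s * Real.sin θ) - c' * Real.cos θ := by
        rw [← hm2, ha00]
        field_simp
      push_cast
      rw [e1, e2]
      have pyth := Real.sin_sq_add_cos_sq θ
      linear_combination (-s) * pyth

theorem stmt7 (θ : ℝ) (hθ : Irrational (Real.tan θ)) (ε : ℝ) (hε : 0 < ε)
    (s : ℝ)
    (hs : ¬∃ p q : ℚ, s = (p : ℝ) * Real.cos θ + (q : ℝ) * Real.sin θ) :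
    Dense {p : ℝ × ℝ | ∃ m n k : ℤ, ∃ t : ℝ,
      0 ≤ (m : ℝ) * Real.sin θ + (n : ℝ) * Real.cos θ ∧
      (m : ℝ) * Real.sin θ + (n : ℝ) * Real.cos θ < ε ∧
      p = ((m : ℝ) * Real.cos θ - (n : ℝ) * Real.sin θ + t, (k : ℝ) + s * t)} := by
  have hΓdense := dense_gamma θ s hθ hs
  intro z
  rw [Metric.mem_closure_iff]
  intro δ hδ
  have hmin : 0 < min (ε / 2) δ := lt_min (half_pos hε) hδ
  obtain ⟨w, hwΓ, hwd⟩ := Metric.mem_closure_iff.1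
    (hΓdense ((ε / 2, s * z.1 - z.2) : ℝ × ℝ)) (min (ε / 2) δ) hmin
  obtain ⟨m, n, k, rfl⟩ := mem_closure_triple'.1 hwΓ
  rw [gamma_sum] at hwd
  set yy := (m : ℝ) * Real.sin θ + (n : ℝ) * Real.cos θ with hyy
  set xv := (m : ℝ) * Real.cos θ - (n : ℝ) * Real.sin θ with hxv
  rw [Prod.dist_eq] at hwd
  have hw1 : dist (ε / 2) yy < ε / 2 :=
    lt_of_le_of_lt (le_max_left _ _) (lt_of_lt_of_le hwd (min_le_left _ _))
  have hw2 : dist (s * z.1 - z.2) (s * xv + (k : ℝ)) < δ :=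
    lt_of_le_of_lt (le_max_right _ _) (lt_of_lt_of_le hwd (min_le_right _ _))
  rw [Real.dist_eq] at hw1 hw2
  have hy0 : 0 ≤ yy := by
    have := abs_lt.1 hw1
    linarith [this.1, this.2]
  have hyε : yy < ε := by
    have := abs_lt.1 hw1
    linarith [this.1, this.2]
  refine ⟨((m : ℝ) * Real.cos θ - (n : ℝ) * Real.sin θ + (z.1 - xv),
      ((-k : ℤ) : ℝ) + s * (z.1 - xv)), ⟨m, n, -k, z.1 - xv, hy0, hyε, rfl⟩, ?_⟩
  have hz : z = (z.1, z.2) := rfl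
  rw [hz, Prod.dist_eq]
  have hfst : ((m : ℝ) * Real.cos θ - (n : ℝ) * Real.sin θ + (z.1 - xv)) = z.1 := by
    rw [hxv]; ring
  rw [hfst]
  simp only [dist_self]
  have hsnd : dist z.2 (((-k : ℤ) : ℝ) + s * (z.1 - xv))
      = |(s * z.1 - z.2) - (s * xv + (k : ℝ))| := by
    rw [Real.dist_eq, abs_sub_comm]
    push_cast
    congr 1
    ring
  rw [hsnd]
  exact max_lt hδ hw2
end

section
/- Let θ ∈ ℝ with tan θ irrational, λ = a·cos θ − b·sin θ with a, b, d ∈ ℤ relatively prime, d ≠ 0, λ* = a·sin θ + b·cos θ, and suppose 0 < ε < 1/|λ*|. With Λ_F, Λ = Λ_F × ℤ, w = (1, λ/d), and S = {y : (0, y) ∈ Λ + wℝ}, the closure of S equals {(l + t·λ*)/d : l ∈ ℤ, 0 ≤ t ≤ ε}. -/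
open Pointwise

lemma dense_aux (u v : ℝ) (hv : v ≠ 0) (h : Irrational (u / v)) :
    Dense {x : ℝ | ∃ m n : ℤ, x = m * u + n * v} := by
  set S : AddSubgroup ℝ :=
    { carrier := {x : ℝ | ∃ m n : ℤ, x = m * u + n * v}
      zero_mem' := ⟨0, 0, by simp⟩
      add_mem' := by
        rintro x y ⟨m, n, rfl⟩ ⟨m', n', rfl⟩
        exact ⟨m + m', n + n', by push_cast; ring⟩
      neg_mem' := by
        rintro x ⟨m, n, rfl⟩
        exact ⟨-m, -n, by push_cast; ring⟩ } with hS
  rcases S.dense_or_cyclic with hd | ⟨g, hgen⟩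
  · exact hd
  · exfalso
    have hu : u ∈ S := ⟨1, 0, by simp⟩
    have hvS : v ∈ S := ⟨0, 1, by simp⟩
    rw [hgen] at hu hvS
    obtain ⟨m0, hm0⟩ := AddSubgroup.mem_closure_singleton.mp hu
    obtain ⟨n0, hn0⟩ := AddSubgroup.mem_closure_singleton.mp hvS
    rw [zsmul_eq_mul] at hm0 hn0
    have hg0 : g ≠ 0 := by rintro rfl; apply hv; rw [← hn0]; ring
    apply h
    refine ⟨(m0 : ℚ) / (n0 : ℚ), ?_⟩
    rw [← hm0, ← hn0]
    push_cast
    rw [mul_div_mul_right _ _ hg0]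

lemma key_id (θ : ℝ) (a b d : ℤ) (hd : (d : ℝ) ≠ 0) (m n k : ℤ) :
    (k : ℝ) + ((a : ℝ) * Real.cos θ - (b : ℝ) * Real.sin θ) / d *
        ((n : ℝ) * Real.sin θ - (m : ℝ) * Real.cos θ)
      = (((k * d - m * a - n * b : ℤ) : ℝ) +
          ((m : ℝ) * Real.sin θ + (n : ℝ) * Real.cos θ) *
          ((a : ℝ) * Real.sin θ + (b : ℝ) * Real.cos θ)) / d := by
  have p := Real.sin_sq_add_cos_sq θ
  field_simp
  push_cast
  linear_combination (-((a : ℝ) * m + (b : ℝ) * n)) * p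

theorem stmt9 (θ : ℝ) (hθ : Irrational (Real.tan θ)) (a b d : ℤ) (hd : d ≠ 0)
    (hg : Int.gcd a (Int.gcd b d) = 1) (ε : ℝ) (hε0 : 0 < ε)
    (hε : ε < 1 / |(a : ℝ) * Real.sin θ + (b : ℝ) * Real.cos θ|) :
    closure {y : ℝ | ∃ m n k : ℤ, ∃ t : ℝ,
        0 ≤ (m : ℝ) * Real.sin θ + (n : ℝ) * Real.cos θ ∧
        (m : ℝ) * Real.sin θ + (n : ℝ) * Real.cos θ < ε ∧
        ((0 : ℝ), y) = ((m : ℝ) * Real.cos θ - (n : ℝ) * Real.sin θ + t,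
          (k : ℝ) + ((a : ℝ) * Real.cos θ - (b : ℝ) * Real.sin θ) / d * t)}
      = {y : ℝ | ∃ l : ℤ, ∃ t : ℝ, 0 ≤ t ∧ t ≤ ε ∧
          y = ((l : ℝ) + t * ((a : ℝ) * Real.sin θ + (b : ℝ) * Real.cos θ)) / d} := by
  set s := Real.sin θ with hs
  set c := Real.cos θ with hc
  set Ls : ℝ := (a : ℝ) * s + (b : ℝ) * c with hLs
  have hdR : (d : ℝ) ≠ 0 := Int.cast_ne_zero.mpr hd
  have hcos : c ≠ 0 := by
    intro h
    apply hθ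
    refine ⟨0, ?_⟩
    rw [Real.tan_eq_sin_div_cos, ← hs, ← hc, h, div_zero]
    simp
  have hLs0 : Ls ≠ 0 := by
    intro h
    rw [h] at hε
    simp at hε
    linarith
  -- the trace set
  set S : Set ℝ := {y : ℝ | ∃ m n k : ℤ, ∃ t : ℝ,
      0 ≤ (m : ℝ) * s + (n : ℝ) * c ∧
      (m : ℝ) * s + (n : ℝ) * c < ε ∧
      ((0 : ℝ), y) = ((m : ℝ) * c - (n : ℝ) * s + t,
        (k : ℝ) + ((a : ℝ) * c - (b : ℝ) * s) / d * t)} with hSdef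
  set R : Set ℝ := {y : ℝ | ∃ l : ℤ, ∃ t : ℝ, 0 ≤ t ∧ t ≤ ε ∧
      y = ((l : ℝ) + t * Ls) / d} with hRdef
  show closure S = R
  have hmemS : ∀ m n k : ℤ, 0 ≤ (m : ℝ) * s + (n : ℝ) * c →
      (m : ℝ) * s + (n : ℝ) * c < ε →
      (((k * d - m * a - n * b : ℤ) : ℝ) + ((m : ℝ) * s + (n : ℝ) * c) * Ls) / d ∈ S := by
    intro m n k h0 h1
    refine ⟨m, n, k, (n : ℝ) * s - (m : ℝ) * c, h0, h1, ?_⟩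
    rw [Prod.mk.injEq]
    constructor
    · ring
    · rw [key_id θ a b d hdR m n k]
  have hSR : S ⊆ R := by
    rintro y ⟨m, n, k, t, h0, h1, hpair⟩
    rw [Prod.mk.injEq] at hpair
    obtain ⟨ht, hy⟩ := hpair
    have htval : t = (n : ℝ) * s - (m : ℝ) * c := by linarith
    refine ⟨k * d - m * a - n * b, (m : ℝ) * s + (n : ℝ) * c, h0, le_of_lt h1, ?_⟩
    rw [hy, htval, key_id θ a b d hdR m n k]
  -- R is closed
  have hRclosed : IsClosed R := by
    have hT : IsClosed (Set.range ((↑) : ℤ → ℝ) + (fun t : ℝ => t * Ls) '' Set.Icc 0 ε) :=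
      IsClosed.add_right_of_isCompact Int.isClosedEmbedding_coe_real.isClosed_range
        ((isCompact_Icc).image (continuous_mul_right Ls))
    have : R = (fun y : ℝ => y * d) ⁻¹'
        (Set.range ((↑) : ℤ → ℝ) + (fun t : ℝ => t * Ls) '' Set.Icc 0 ε) := by
      ext y
      simp only [Set.mem_preimage, Set.mem_add, Set.mem_range, Set.mem_image, hRdef,
        Set.mem_setOf_eq]
      constructor
      · rintro ⟨l, t, h0, h1, rfl⟩
        exact ⟨(l : ℝ), ⟨l, rfl⟩, t * Ls, ⟨t, ⟨h0, h1⟩, rfl⟩, by field_simp⟩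
      · rintro ⟨x, ⟨l, rfl⟩, z, ⟨t, ⟨h0, h1⟩, rfl⟩, hyd⟩
        exact ⟨l, t, h0, h1, by rw [eq_div_iff hdR]; exact hyd.symm⟩
    rw [this]
    exact hT.preimage (continuous_mul_right _)
  apply Set.Subset.antisymm
  · exact closure_minimal hSR hRclosed
  -- R ⊆ closure S
  rintro y ⟨l, t, ht0, ht1, rfl⟩
  rw [Metric.mem_closure_iff]
  intro δ hδ
  -- Bezout
  obtain ⟨A, B, A', B', hbez⟩ : ∃ A B A' B' : ℤ, a * A + (b * A' + d * B') * B = 1 := by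
    refine ⟨Int.gcdA a (Int.gcd b d), Int.gcdB a (Int.gcd b d),
      Int.gcdA b d, Int.gcdB b d, ?_⟩
    have h1 := Int.gcd_eq_gcd_ab a (Int.gcd b d)
    have h2 := Int.gcd_eq_gcd_ab b d
    rw [hg] at h1
    rw [← h2, ← h1]
    norm_num
  set δ' : ℝ := δ * |(d : ℝ)| / |Ls| with hδ'
  have hδ'0 : 0 < δ' := by
    apply div_pos (mul_pos hδ (abs_pos.mpr hdR)) (abs_pos.mpr hLs0)
  set δ'' : ℝ := δ' / 2 with hδ''
  have hδ''0 : 0 < δ'' := by positivity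
  set lo : ℝ := max 0 (t - δ'') with hlo
  set hi : ℝ := min ε (t + δ'') with hhi
  have hlohi : lo < hi := by
    rw [hlo, hhi]
    apply max_lt <;> apply lt_min <;> linarith
  set m0 : ℤ := -l * A with hm0
  set n0 : ℤ := -l * (A' * B) with hn0
  -- density
  have hdense := dense_aux ((d : ℝ) * s) ((d : ℝ) * c) (mul_ne_zero hdR hcos)
    (by rwa [mul_div_mul_left _ _ hdR, ← Real.tan_eq_sin_div_cos])
  set p0 : ℝ := (m0 : ℝ) * s + (n0 : ℝ) * c with hp0
  obtain ⟨g, hgmem, hgIoo⟩ := hdense.exists_mem_open isOpen_Ioo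
    (⟨(lo + hi) / 2 - p0, Set.mem_Ioo.mpr ⟨by linarith, by linarith⟩⟩ :
      Set.Nonempty (Set.Ioo (lo - p0) (hi - p0)))
  obtain ⟨hglo, hghi⟩ := Set.mem_Ioo.mp hgIoo
  obtain ⟨m', n', rfl⟩ := hgmem
  set m : ℤ := m0 + d * m' with hm
  set n : ℤ := n0 + d * n' with hn
  set u : ℝ := (m : ℝ) * s + (n : ℝ) * c with hu
  have huval : u = p0 +
      ((m' : ℝ) * ((d:ℝ) * s) + (n' : ℝ) * ((d:ℝ) * c)) := by
    rw [hu, hm, hn]; push_cast; ring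
  have hulo : lo < u := by rw [huval]; linarith
  have huhi : u < hi := by rw [huval]; linarith
  have hu0 : 0 ≤ u := le_trans (le_max_left 0 _) (le_of_lt hulo)
  have huε : u < ε := lt_of_lt_of_le huhi (min_le_left _ _)
  set k : ℤ := l * (B' * B) + m' * a + n' * b with hk
  have hkd : k * d - m * a - n * b = l := by
    rw [hk, hm, hn, hm0, hn0]
    linear_combination l * hbez
  refine ⟨(((k * d - m * a - n * b : ℤ) : ℝ) + u * Ls) / d, hmemS m n k hu0 huε, ?_⟩
  rw [hkd, Real.dist_eq]
  have : ((l : ℝ) + t * Ls) / d - ((l : ℝ) + u * Ls) / d = (t - u) * Ls / d := by ring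
  rw [this, abs_div, abs_mul]
  rw [div_lt_iff₀ (abs_pos.mpr hdR)]
  have htu : |t - u| < δ' := by
    rw [abs_lt]
    have h1 : t - δ'' ≤ lo := le_max_right 0 _
    have h2 : hi ≤ t + δ'' := min_le_right ε _
    constructor <;> nlinarith [hδ'0]
  calc |t - u| * |Ls| < δ' * |Ls| := by
        apply mul_lt_mul_of_pos_right htu (abs_pos.mpr hLs0)
    _ = δ * |(d : ℝ)| := by
        rw [hδ']; field_simp
end

section
/- Let θ ∈ ℝ with tan θ irrational, λ = a·cos θ − b·sin θ with a, b, d relatively prime integers, d ≠ 0, λ* = a·sin θ + b·cos θ, 0 < ε < 1/|λ*|, Λ = Λ_F × ℤ, w = (1, λ/d). Then Λ + wℝ is not dense in ℝ²; in fact its closure is a proper closed subset of ℝ² whose complement is open and nonempty. -/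
private lemma stmt13_hlp1 (ls ε μs : ℝ) (hε0 : 0 < ε) (h1 : 0 ≤ μs) (h2 : μs < ε) :
    |ls * μs - ls * ε / 2| ≤ |ls * ε| / 2 := by
  rcases le_or_gt 0 ls with h | h
  · rw [abs_of_nonneg (mul_nonneg h hε0.le)]
    rw [abs_le]
    constructor
    · nlinarith
    · nlinarith
  · rw [abs_of_nonpos (by nlinarith : ls * ε ≤ 0)]
    rw [abs_le]
    constructor
    · nlinarith
    · nlinarith

private lemma stmt13_hlp2 (j : ℤ) (w η : ℝ) (hw : |w| ≤ η / 2) :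
    (1 - η) / 2 ≤ |(j : ℝ) + w - 1 / 2| := by
  have h' := abs_le.mp hw
  rcases le_or_gt j 0 with hj | hj
  · have hj' : (j : ℝ) ≤ 0 := by exact_mod_cast hj
    rw [le_abs]
    right
    linarith
  · have hj' : (1 : ℝ) ≤ (j : ℝ) := by exact_mod_cast hj
    rw [le_abs]
    left
    linarith

private lemma stmt13_helper (co si : ℝ) (hpy : si ^ 2 + co ^ 2 = 1) (a b d : ℤ) (hd : d ≠ 0)
    (ε : ℝ) (hε0 : 0 < ε) (hε : ε < 1 / |(a : ℝ) * si + (b : ℝ) * co|) :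
    ∃ p : ℝ × ℝ, ∃ r : ℝ, 0 < r ∧ ∀ m n k : ℤ, ∀ t : ℝ,
      0 ≤ (m : ℝ) * si + (n : ℝ) * co → (m : ℝ) * si + (n : ℝ) * co < ε →
      r ≤ dist p ((m : ℝ) * co - (n : ℝ) * si + t,
        (k : ℝ) + ((a : ℝ) * co - (b : ℝ) * si) / d * t) := by
  set ls : ℝ := (a : ℝ) * si + (b : ℝ) * co with hlsdef
  set l : ℝ := (a : ℝ) * co - (b : ℝ) * si with hldef
  have hls0 : ls ≠ 0 := by
    intro h
    rw [h] at hε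
    simp at hε
    linarith
  have hlspos : 0 < |ls| := abs_pos.mpr hls0
  have hvlt : |ls| * ε < 1 := by
    have := (lt_div_iff₀ hlspos).mp hε
    linarith
  set v : ℝ := ls * ε with hvdef
  have hvabs : |v| = |ls| * ε := by rw [hvdef, abs_mul, abs_of_pos hε0]
  have h1v : 0 < 1 - |v| := by rw [hvabs]; linarith
  have hd' : ((d : ℝ)) ≠ 0 := Int.cast_ne_zero.mpr hd
  have hdpos : 0 < |(d : ℝ)| := abs_pos.mpr hd'
  set D : ℝ := |(d : ℝ)| + |l| with hDdef
  have hD : 0 < D := add_pos_of_pos_of_nonneg hdpos (abs_nonneg _)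
  set c : ℝ := (1 + v) / (2 * d) with hcdef
  refine ⟨(0, c), (1 - |v|) / (2 * D), div_pos h1v (by positivity), ?_⟩
  intro m n k t h1 h2
  set μ : ℝ := (m : ℝ) * co - (n : ℝ) * si with hμdef
  set μs : ℝ := (m : ℝ) * si + (n : ℝ) * co with hμsdef
  set u : ℝ := ls * μs with hudef
  set X : ℝ := μ + t with hXdef
  set Y : ℝ := (k : ℝ) + l / d * t with hYdef
  clear_value X Y u μ μs c D v l ls
  have e2 : l * μ = ((a : ℝ) * m + (b : ℝ) * n) - u := by
    rw [hldef, hudef, hlsdef, hμdef, hμsdef]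
    linear_combination ((a : ℝ) * (m : ℝ) + (b : ℝ) * (n : ℝ)) * hpy
  set j : ℤ := d * k - a * m - b * n with hjdef
  clear_value j
  have ej : ((j : ℤ) : ℝ) = (d : ℝ) * k - ((a : ℝ) * m + (b : ℝ) * n) := by
    rw [hjdef]; push_cast; ring
  have e1 : (d : ℝ) * Y - l * X = (j : ℝ) + u := by
    have hYd : (d : ℝ) * Y = (d : ℝ) * (k : ℝ) + l * t := by
      rw [hYdef]; field_simp
    rw [hYd, hXdef, ej]
    linear_combination -e2
  have habs : |u - v / 2| ≤ |v| / 2 := by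
    rw [hudef, hvdef]
    exact stmt13_hlp1 ls ε μs hε0 h1 h2
  have core : (1 - |v|) / 2 ≤ |(j : ℝ) + u - (1 + v) / 2| := by
    have h := stmt13_hlp2 j (u - v / 2) |v| habs
    have e : (j : ℝ) + (u - v / 2) - 1 / 2 = (j : ℝ) + u - (1 + v) / 2 := by ring
    rwa [e] at h
  have hc : (d : ℝ) * c = (1 + v) / 2 := by
    rw [hcdef]; field_simp
  have hle : (1 - |v|) / 2 ≤ |(d : ℝ) * (Y - c) - l * (X - 0)| := by
    have e3 : (d : ℝ) * (Y - c) - l * (X - 0) = (j : ℝ) + u - (1 + v) / 2 := by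
      rw [mul_sub, hc]
      have h4 : (d : ℝ) * Y - (1 + v) / 2 - l * (X - 0) =
          (d : ℝ) * Y - l * X - (1 + v) / 2 := by ring
      rw [h4, e1]
    rw [e3]
    exact core
  have htri : |(d : ℝ) * (Y - c) - l * (X - 0)| ≤ |(d : ℝ)| * |Y - c| + |l| * |X - 0| := by
    calc |(d : ℝ) * (Y - c) - l * (X - 0)| ≤ |(d : ℝ) * (Y - c)| + |l * (X - 0)| :=
          abs_sub _ _
      _ = |(d : ℝ)| * |Y - c| + |l| * |X - 0| := by rw [abs_mul, abs_mul]
  rw [Prod.dist_eq, Real.dist_eq, Real.dist_eq]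
  set M : ℝ := max |0 - X| |c - Y| with hMdef
  have m1 : |X - 0| ≤ M := by rw [hMdef, abs_sub_comm]; exact le_max_left _ _
  have m2 : |Y - c| ≤ M := by rw [hMdef, abs_sub_comm]; exact le_max_right _ _
  have t1 : |(d : ℝ)| * |Y - c| ≤ |(d : ℝ)| * M := mul_le_mul_of_nonneg_left m2 (abs_nonneg _)
  have t2 : |l| * |X - 0| ≤ |l| * M := mul_le_mul_of_nonneg_left m1 (abs_nonneg _)
  rw [div_le_iff₀ (by positivity)]
  have hfin : (1 - |v|) / 2 ≤ D * M := by
    rw [hDdef]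
    calc (1 - |v|) / 2 ≤ |(d : ℝ)| * |Y - c| + |l| * |X - 0| := le_trans hle htri
      _ ≤ |(d : ℝ)| * M + |l| * M := add_le_add t1 t2
      _ = (|(d : ℝ)| + |l|) * M := by ring
  linarith

theorem stmt13 (θ : ℝ) (hθ : Irrational (Real.tan θ)) (a b d : ℤ) (hd : d ≠ 0)
    (hg : Int.gcd a (Int.gcd b d) = 1) (ε : ℝ) (hε0 : 0 < ε)
    (hε : ε < 1 / |(a : ℝ) * Real.sin θ + (b : ℝ) * Real.cos θ|) :
    let L : Set (ℝ × ℝ) := {p | ∃ m n k : ℤ, ∃ t : ℝ,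
      0 ≤ (m : ℝ) * Real.sin θ + (n : ℝ) * Real.cos θ ∧
      (m : ℝ) * Real.sin θ + (n : ℝ) * Real.cos θ < ε ∧
      p = ((m : ℝ) * Real.cos θ - (n : ℝ) * Real.sin θ + t,
        (k : ℝ) + ((a : ℝ) * Real.cos θ - (b : ℝ) * Real.sin θ) / d * t)}
    ¬ Dense L ∧ IsOpen (closure L)ᶜ ∧ ((closure L)ᶜ).Nonempty := by
  intro L
  obtain ⟨p, r, hr, key⟩ := stmt13_helper (Real.cos θ) (Real.sin θ)
    (Real.sin_sq_add_cos_sq θ) a b d hd ε hε0 hε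
  have hp : p ∉ closure L := by
    rw [Metric.mem_closure_iff]
    push_neg
    refine ⟨r, hr, ?_⟩
    rintro q hq
    obtain ⟨m, n, k, t, h1, h2, rfl⟩ := hq
    exact key m n k t h1 h2
  exact ⟨fun hdense => hp (hdense p), isClosed_closure.isOpen_compl, ⟨p, hp⟩⟩
end

section
/- Let θ ∈ ℝ with tan θ irrational, ε > 0, and Λ_F the cut-and-project set with window [0, ε). For any real s, if the set L = (Λ_F × ℤ) + (1, s)·ℝ is not dense in ℝ², then s ∈ ℚ·cos θ + ℚ·sin θ. -/
lemma uniqK (x : ℝ) (k k' : ℤ) (r r' : ℝ) (h : |x + k| ≤ r) (h' : |x + k'| ≤ r')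
    (hrr : r + r' < 1) : k = k' := by
  have : |(k : ℝ) - k'| < 1 := by
    have := abs_sub (x + k) (x + k')
    calc |(k:ℝ) - k'| = |(x + k) - (x + k')| := by ring_nf
    _ ≤ |x + k| + |x + k'| := abs_sub _ _
    _ < 1 := by linarith
  have h2 : |k - k'| < 1 := by exact_mod_cast (by push_cast; exact this : |((k - k' : ℤ) : ℝ)| < 1)
  rw [abs_lt] at h2
  omega

lemma denseZZ {α : ℝ} (hα : Irrational α) (a b : ℝ) (hab : a < b) :
    ∃ m n : ℤ, a < m * α + n ∧ m * α + n < b := by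
  classical
  set S : AddSubgroup ℝ :=
    { carrier := {x | ∃ m n : ℤ, x = m * α + n}
      zero_mem' := ⟨0, 0, by push_cast; ring⟩
      add_mem' := by
        rintro x y ⟨m, n, rfl⟩ ⟨m', n', rfl⟩
        exact ⟨m + m', n + n', by push_cast; ring⟩
      neg_mem' := by
        rintro x ⟨m, n, rfl⟩
        exact ⟨-m, -n, by push_cast; ring⟩ } with hS
  have hdense : Dense (S : Set ℝ) := by
    rcases S.dense_or_cyclic with h | ⟨g, hg⟩
    · exact h
    · exfalso
      have hαS : α ∈ S := ⟨1, 0, by push_cast; ring⟩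
      have h1S : (1 : ℝ) ∈ S := ⟨0, 1, by push_cast; ring⟩
      rw [hg, AddSubgroup.mem_closure_singleton] at hαS h1S
      obtain ⟨i, hi⟩ := hαS
      obtain ⟨j, hj⟩ := h1S
      have hj0 : j ≠ 0 := by rintro rfl; simp at hj
      have hg0 : g ≠ 0 := by rintro rfl; simp at hj
      refine hα ⟨(i : ℚ) / j, ?_⟩
      have : (j : ℝ) ≠ 0 := by exact_mod_cast hj0
      push_cast
      rw [div_eq_iff this]
      rw [zsmul_eq_mul] at hi hj
      linear_combination (j : ℝ) * hi - (i : ℝ) * hj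
  have := hdense ((a + b) / 2)
  rw [Metric.mem_closure_iff] at this
  obtain ⟨y, hyS, hy⟩ := this ((b - a) / 2) (by linarith)
  obtain ⟨m, n, rfl⟩ := hyS
  rw [Real.dist_eq, abs_sub_lt_iff] at hy
  exact ⟨m, n, by constructor <;> linarith [hy.1, hy.2]⟩

lemma stepL1 {α β γ₀ : ℝ} (hα : Irrational α) (hγ : 0 < γ₀)
    (H8 : ∀ m n : ℤ, |m * α + n| < γ₀ → ∃ k : ℤ, |β * m + k| < 1/8) :
    ∀ m n : ℤ, |m * α + n| ≤ γ₀/4 → ∃ k : ℤ, |β * m + k| ≤ |m * α + n| / (2 * γ₀) := by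
  intro m n hu
  by_cases hu0 : (m : ℝ) * α + n = 0
  · have hm : m = 0 := by
      by_contra hm
      apply hα
      refine ⟨(-n : ℚ) / m, ?_⟩
      have hm' : (m : ℝ) ≠ 0 := by exact_mod_cast hm
      push_cast
      rw [div_eq_iff hm']
      linarith [hu0]
    have hn : n = 0 := by
      have : (n : ℝ) = 0 := by rw [hm] at hu0; push_cast at hu0; linarith
      exact_mod_cast this
    refine ⟨0, ?_⟩
    rw [hm, hn]
    simp
  · have hupos : 0 < |(m : ℝ) * α + n| := abs_pos.mpr hu0
    set u : ℝ := (m : ℝ) * α + n with hudef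
    obtain ⟨k₀, hk₀⟩ := H8 m n (lt_of_le_of_lt hu (by linarith))
    set e : ℝ := β * m + k₀ with hedef
    set J : ℕ := ⌊γ₀ / (2 * |u|)⌋₊ with hJdef
    have hx2 : (2 : ℝ) ≤ γ₀ / (2 * |u|) := by
      rw [le_div_iff₀ (by linarith)]; linarith
    have hJle : (J : ℝ) ≤ γ₀ / (2 * |u|) := Nat.floor_le (by linarith)
    have hJlow : γ₀ / (4 * |u|) ≤ (J : ℝ) := by
      have h1 : γ₀ / (2 * |u|) - 1 < (J : ℝ) := Nat.sub_one_lt_floor _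
      have h2 : γ₀ / (4 * |u|) ≤ γ₀ / (2 * |u|) - 1 := by
        rw [div_sub' (ne_of_gt (by linarith) : (2:ℝ) * |u| ≠ 0), div_le_div_iff₀ (by linarith) (by linarith)]
        nlinarith [hx2, hupos]
      linarith
    have key : ∀ j : ℕ, j ≤ J → |(j : ℝ) * e| < 1/8 := by
      intro j
      induction j with
      | zero => intro _; norm_num
      | succ j ih =>
        intro hj
        have hje := ih (Nat.le_of_succ_le hj)
        have hlt : |((j : ℝ) + 1) * e| < 1/4 := by
          have h3 : ((j : ℝ) + 1) * e = (j : ℝ) * e + e := by ring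
          rw [h3]
          calc |(j : ℝ) * e + e| ≤ |(j : ℝ) * e| + |e| := abs_add_le _ _
          _ < 1/4 := by rw [hedef] at hk₀ ⊢; linarith
        have hwin : |(((j : ℤ) + 1) * m : ℤ) * α + ((((j : ℤ) + 1) * n : ℤ) : ℝ)| < γ₀ := by
          push_cast
          have h4 : ((j : ℝ) + 1) * m * α + ((j : ℝ) + 1) * n = ((j : ℝ) + 1) * u := by
            rw [hudef]; ring
          rw [h4, abs_mul]
          have hj1 : |(j : ℝ) + 1| ≤ (J : ℝ) := by
            rw [abs_of_nonneg (by positivity)]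
            have : ((j : ℕ) + 1 : ℝ) ≤ (J : ℝ) := by exact_mod_cast hj
            push_cast at this
            linarith
          calc |(j : ℝ) + 1| * |u| ≤ (J : ℝ) * |u| :=
                mul_le_mul_of_nonneg_right hj1 (abs_nonneg u)
          _ ≤ γ₀ / 2 := by
                rw [le_div_iff₀ (by linarith)] at hJle
                nlinarith [hJle]
          _ < γ₀ := by linarith
        obtain ⟨k', hk'⟩ := H8 _ _ hwin
        have heq : β * ((((j : ℤ) + 1) * m : ℤ) : ℝ) + ((((j : ℤ) + 1) * k₀ : ℤ) : ℝ) = ((j : ℝ) + 1) * e := by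
          push_cast; rw [hedef]; ring
        have hk'' : k' = ((j : ℤ) + 1) * k₀ := by
          refine uniqK (β * ((((j : ℤ) + 1) * m : ℤ) : ℝ)) k' _ (1/8) (1/4) hk'.le ?_ (by norm_num)
          rw [heq]; exact hlt.le
        rw [hk''] at hk'
        rw [heq] at hk'
        have : |((j + 1 : ℕ) : ℝ) * e| = |((j : ℝ) + 1) * e| := by push_cast; ring_nf
        rw [this]
        exact hk'
    have hJe := key J le_rfl
    rw [abs_mul, Nat.abs_cast] at hJe
    have h5 : γ₀ / (4 * |u|) * |e| ≤ (J : ℝ) * |e| :=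
      mul_le_mul_of_nonneg_right hJlow (abs_nonneg e)
    have h6 : γ₀ / (4 * |u|) * |e| < 1/8 := lt_of_le_of_lt h5 hJe
    rw [div_mul_eq_mul_div, div_lt_iff₀ (by linarith)] at h6
    refine ⟨k₀, ?_⟩
    rw [le_div_iff₀ (by linarith : (0:ℝ) < 2 * γ₀)]
    nlinarith [h6]

set_option maxHeartbeats 1000000 in
lemma stepL2' {α β γ₀ : ℝ} (hγ : 0 < γ₀)
    (hL1 : ∀ m n : ℤ, |m * α + n| ≤ γ₀/4 → ∃ k : ℤ, |β * m + k| ≤ |m * α + n| / (2 * γ₀))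
    (m₁ n₁ k₁ m₂ n₂ k₂ : ℤ)
    (hu₁p : 0 < (m₁ : ℝ) * α + n₁) (hu₁ : (m₁ : ℝ) * α + n₁ ≤ γ₀/64)
    (hu₂p : 0 < (m₂ : ℝ) * α + n₂) (hu₂ : (m₂ : ℝ) * α + n₂ ≤ (m₁ : ℝ) * α + n₁)
    (he₁ : |β * m₁ + k₁| ≤ ((m₁ : ℝ) * α + n₁) / (2 * γ₀))
    (he₂ : |β * m₂ + k₂| ≤ ((m₂ : ℝ) * α + n₂) / (2 * γ₀)) :
    |(β * m₁ + k₁) * ((m₂ : ℝ) * α + n₂) - (β * m₂ + k₂) * ((m₁ : ℝ) * α + n₁)|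
      ≤ ((m₁ : ℝ) * α + n₁) * ((m₂ : ℝ) * α + n₂)^2 * (16 / γ₀^2) := by
  set u₁ : ℝ := (m₁ : ℝ) * α + n₁ with hu₁def
  set u₂ : ℝ := (m₂ : ℝ) * α + n₂ with hu₂def
  set e₁ : ℝ := β * m₁ + k₁ with he₁def
  set e₂ : ℝ := β * m₂ + k₂ with he₂def
  set T : ℝ := γ₀ / 4 with hTdef
  have hT : 0 < T := by rw [hTdef]; linarith
  have hu₁T : u₁ ≤ T / 16 := by rw [hTdef]; linarith
  -- define j
  set j : ℕ := ⌊T / u₁⌋₊ with hjdef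
  have hjle : (j : ℝ) ≤ T / u₁ := Nat.floor_le (by positivity)
  have hjup : (j : ℝ) * u₁ ≤ T := by
    rw [← le_div_iff₀ hu₁p]; exact hjle
  have hjlow : T - u₁ < (j : ℝ) * u₁ := by
    have h1 : T / u₁ - 1 < (j : ℝ) := Nat.sub_one_lt_floor _
    have := mul_lt_mul_of_pos_right h1 hu₁p
    rw [sub_mul, div_mul_cancel₀ _ (ne_of_gt hu₁p)] at this
    linarith
  have hju₁low : (15/16) * T ≤ (j : ℝ) * u₁ := by nlinarith [hu₁T]
  -- define j'
  set j' : ℕ := ⌊((j : ℝ) * u₁) / u₂⌋₊ with hj'def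
  have hj'le : (j' : ℝ) ≤ (j : ℝ) * u₁ / u₂ := Nat.floor_le (by positivity)
  have hj'up : (j' : ℝ) * u₂ ≤ (j : ℝ) * u₁ := by
    rw [← le_div_iff₀ hu₂p]; exact hj'le
  have hj'low : (j : ℝ) * u₁ - u₂ < (j' : ℝ) * u₂ := by
    have h1 : (j : ℝ) * u₁ / u₂ - 1 < (j' : ℝ) := Nat.sub_one_lt_floor _
    have := mul_lt_mul_of_pos_right h1 hu₂p
    rw [sub_mul, div_mul_cancel₀ _ (ne_of_gt hu₂p)] at this
    linarith
  have hu₂T : u₂ ≤ T / 16 := le_trans hu₂ hu₁T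
  have hj'u₂low : (7/8) * T ≤ (j' : ℝ) * u₂ := by nlinarith
  -- the difference pair
  set mq : ℤ := (j : ℤ) * m₁ - (j' : ℤ) * m₂ with hmqdef
  set nq : ℤ := (j : ℤ) * n₁ - (j' : ℤ) * n₂ with hnqdef
  have huq : (mq : ℝ) * α + nq = (j : ℝ) * u₁ - (j' : ℝ) * u₂ := by
    rw [hmqdef, hnqdef, hu₁def, hu₂def]; push_cast; ring
  have huq0 : 0 ≤ (mq : ℝ) * α + nq := by rw [huq]; linarith
  have huqlt : (mq : ℝ) * α + nq < u₂ := by rw [huq]; linarith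
  obtain ⟨kq, hkq⟩ := hL1 mq nq (by
    rw [abs_of_nonneg huq0]
    have : u₂ ≤ γ₀ / 4 := by rw [hTdef] at hu₂T; linarith
    linarith)
  have hkq' : |β * mq + kq| ≤ u₂ / (2 * γ₀) := by
    refine le_trans hkq ?_
    rw [abs_of_nonneg huq0]
    exact div_le_div_of_nonneg_right (le_of_lt huqlt) (by linarith : (0:ℝ) ≤ 2 * γ₀)
  -- identify kq with j k₁ - j' k₂
  have hEeq : β * (mq : ℝ) + (((j : ℤ) * k₁ - (j' : ℤ) * k₂ : ℤ) : ℝ)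
      = (j : ℝ) * e₁ - (j' : ℝ) * e₂ := by
    rw [hmqdef, he₁def, he₂def]; push_cast; ring
  have hje₁ : |(j : ℝ) * e₁| ≤ 1/8 := by
    rw [abs_mul, Nat.abs_cast]
    calc (j : ℝ) * |e₁| ≤ (j : ℝ) * (u₁ / (2 * γ₀)) :=
          mul_le_mul_of_nonneg_left he₁ (Nat.cast_nonneg j)
    _ = ((j : ℝ) * u₁) / (2 * γ₀) := by ring
    _ ≤ T / (2 * γ₀) := div_le_div_of_nonneg_right hjup (by linarith : (0:ℝ) ≤ 2 * γ₀)
    _ = 1/8 := by rw [hTdef]; field_simp; ring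
  have hj'e₂ : |(j' : ℝ) * e₂| ≤ 1/8 := by
    rw [abs_mul, Nat.abs_cast]
    calc (j' : ℝ) * |e₂| ≤ (j' : ℝ) * (u₂ / (2 * γ₀)) :=
          mul_le_mul_of_nonneg_left he₂ (Nat.cast_nonneg j')
    _ = ((j' : ℝ) * u₂) / (2 * γ₀) := by ring
    _ ≤ T / (2 * γ₀) := div_le_div_of_nonneg_right (le_trans hj'up hjup) (by linarith : (0:ℝ) ≤ 2 * γ₀)
    _ = 1/8 := by rw [hTdef]; field_simp; ring
  have hEbound : |(j : ℝ) * e₁ - (j' : ℝ) * e₂| ≤ 1/4 := by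
    calc |(j : ℝ) * e₁ - (j' : ℝ) * e₂| ≤ |(j : ℝ) * e₁| + |(j' : ℝ) * e₂| := abs_sub _ _
    _ ≤ 1/4 := by linarith
  have hu₂small : u₂ / (2 * γ₀) ≤ 1/128 := by
    rw [div_le_iff₀ (by linarith : (0:ℝ) < 2 * γ₀)]
    rw [hTdef] at hu₂T
    linarith
  have hkqeq : kq = (j : ℤ) * k₁ - (j' : ℤ) * k₂ := by
    refine uniqK (β * (mq : ℝ)) kq _ (u₂ / (2*γ₀)) (1/4) hkq' ?_ (by linarith)
    rw [hEeq]; exact hEbound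
  have hE : |(j : ℝ) * e₁ - (j' : ℝ) * e₂| ≤ u₂ / (2 * γ₀) := by
    rw [← hEeq, ← hkqeq]; exact hkq'
  clear_value u₁ u₂ e₁ e₂ T j j' mq nq
  -- main algebraic estimate
  have halg : (j : ℝ) * (j' : ℝ) * (e₁ * u₂ - e₂ * u₁)
      = ((j : ℝ) * e₁ - (j' : ℝ) * e₂) * ((j' : ℝ) * u₂)
        + ((j' : ℝ) * e₂) * ((j' : ℝ) * u₂ - (j : ℝ) * u₁) := by ring
  have hA : |((j : ℝ) * e₁ - (j' : ℝ) * e₂) * ((j' : ℝ) * u₂)| ≤ (u₂ / (2 * γ₀)) * T := by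
    rw [abs_mul]
    have h1 : |(j' : ℝ) * u₂| ≤ T := by
      rw [abs_of_nonneg (by positivity)]; exact le_trans hj'up hjup
    exact mul_le_mul hE h1 (abs_nonneg _) (by positivity)
  have hB : |((j' : ℝ) * e₂) * ((j' : ℝ) * u₂ - (j : ℝ) * u₁)| ≤ (1/8) * u₂ := by
    rw [abs_mul]
    have h1 : |(j' : ℝ) * u₂ - (j : ℝ) * u₁| ≤ u₂ := by
      rw [abs_le]; constructor <;> linarith
    exact mul_le_mul hj'e₂ h1 (abs_nonneg _) (by norm_num)
  have hq : u₂ / (2 * γ₀) * T = u₂ / 8 := by rw [hTdef]; field_simp; ring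
  have hRHS : |(j : ℝ) * (j' : ℝ) * (e₁ * u₂ - e₂ * u₁)| ≤ u₂ / 4 := by
    rw [halg]
    calc |((j : ℝ) * e₁ - (j' : ℝ) * e₂) * ((j' : ℝ) * u₂)
        + ((j' : ℝ) * e₂) * ((j' : ℝ) * u₂ - (j : ℝ) * u₁)|
        ≤ |((j : ℝ) * e₁ - (j' : ℝ) * e₂) * ((j' : ℝ) * u₂)|
          + |((j' : ℝ) * e₂) * ((j' : ℝ) * u₂ - (j : ℝ) * u₁)| := abs_add_le _ _
    _ ≤ u₂ / 4 := by linarith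
  have hjj' : T^2 ≤ 2 * u₁ * u₂ * ((j : ℝ) * (j' : ℝ)) := by
    have h1 : (15/16) * T * ((7/8) * T) ≤ ((j:ℝ) * u₁) * ((j':ℝ) * u₂) := by
      apply mul_le_mul hju₁low hj'u₂low (by positivity) (by positivity)
    nlinarith [h1, hT]
  -- conclude
  rw [abs_mul ((j : ℝ) * (j' : ℝ)) (e₁ * u₂ - e₂ * u₁),
    abs_of_nonneg (by positivity : (0:ℝ) ≤ (j : ℝ) * (j' : ℝ))] at hRHS
  set X : ℝ := e₁ * u₂ - e₂ * u₁ with hXdef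
  clear_value X
  have hfin : |X| * γ₀^2 ≤ 16 * (u₁ * u₂^2) := by
    have h2 : |X| * T^2 ≤ |X| * (2 * u₁ * u₂ * ((j : ℝ) * (j' : ℝ))) :=
      mul_le_mul_of_nonneg_left hjj' (abs_nonneg X)
    have h3 : (j : ℝ) * (j' : ℝ) * |X| ≤ u₂ / 4 := hRHS
    have h4 : 2 * u₁ * u₂ * ((j : ℝ) * (j' : ℝ) * |X|) ≤ 2 * u₁ * u₂ * (u₂ / 4) :=
      mul_le_mul_of_nonneg_left h3 (by positivity)
    have hT2 : T^2 = γ₀^2 / 16 := by rw [hTdef]; ring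
    have h5 : |X| * (2 * u₁ * u₂ * ((j : ℝ) * (j' : ℝ)))
        = 2 * u₁ * u₂ * ((j : ℝ) * (j' : ℝ) * |X|) := by ring
    have h8 : 2 * u₁ * u₂ * (u₂ / 4) = u₁ * u₂^2 / 2 := by ring
    have h7 : |X| * γ₀^2 = 16 * (|X| * T^2) := by rw [hT2]; ring
    have hpos : (0:ℝ) ≤ u₁ * u₂^2 := by positivity
    calc |X| * γ₀^2 = 16 * (|X| * T^2) := h7
    _ ≤ 16 * (|X| * (2 * u₁ * u₂ * ((j : ℝ) * (j' : ℝ)))) := by linarith [h2]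
    _ = 16 * (2 * u₁ * u₂ * ((j : ℝ) * (j' : ℝ) * |X|)) := by rw [h5]
    _ ≤ 16 * (2 * u₁ * u₂ * (u₂ / 4)) := by linarith [h4]
    _ = 16 * (u₁ * u₂^2 / 2) := by rw [h8]
    _ ≤ 16 * (u₁ * u₂^2) := by linarith [hpos]
  rw [show u₁ * u₂^2 * (16 / γ₀^2) = 16 * (u₁ * u₂^2) / γ₀^2 by ring]
  rw [le_div_iff₀ (by positivity : (0:ℝ) < γ₀^2)]
  linarith [hfin]

set_option maxHeartbeats 1000000 in
lemma lemX {α : ℝ} (hα : Irrational α) (β : ℝ)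
    (H : ∀ δ : ℝ, 0 < δ → ∃ γ : ℝ, 0 < γ ∧
      ∀ m n : ℤ, |m * α + n| < γ → ∃ k : ℤ, |β * m + k| < δ) :
    ∃ x y : ℚ, β = (x : ℝ) + (y : ℝ) * α := by
  obtain ⟨γ₁, hγ₁, H8⟩ := H (1/8) (by norm_num)
  have hγ₀ : 0 < min γ₁ 1 := lt_min hγ₁ one_pos
  have hγ₀1 : min γ₁ 1 ≤ 1 := min_le_right _ _
  set γ₀ := min γ₁ 1 with hγ₀def
  clear_value γ₀
  have H8' : ∀ m n : ℤ, |(m : ℝ) * α + n| < γ₀ → ∃ k : ℤ, |β * m + k| < 1/8 := by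
    intro m n h
    exact H8 m n (lt_of_lt_of_le h (hγ₀def ▸ min_le_left _ _))
  have hL1 := stepL1 hα hγ₀ H8'
  -- equality of ratios
  have hratio : ∀ m₁ n₁ k₁ m₂ n₂ k₂ : ℤ,
      0 < (m₁ : ℝ) * α + n₁ → (m₁ : ℝ) * α + n₁ ≤ γ₀/64 →
      0 < (m₂ : ℝ) * α + n₂ → (m₂ : ℝ) * α + n₂ ≤ γ₀/64 →
      |β * m₁ + k₁| ≤ ((m₁ : ℝ) * α + n₁) / (2 * γ₀) →
      |β * m₂ + k₂| ≤ ((m₂ : ℝ) * α + n₂) / (2 * γ₀) →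
      (β * m₁ + k₁) * ((m₂ : ℝ) * α + n₂) = (β * m₂ + k₂) * ((m₁ : ℝ) * α + n₁) := by
    intro m₁ n₁ k₁ m₂ n₂ k₂ hu₁p hu₁ hu₂p hu₂ he₁ he₂
    by_contra hne
    have hd : 0 < |(β * m₁ + k₁) * ((m₂ : ℝ) * α + n₂) - (β * m₂ + k₂) * ((m₁ : ℝ) * α + n₁)| :=
      abs_pos.mpr (sub_ne_zero.mpr hne)
    have hKpos : (0:ℝ) < 16 / γ₀^2 := div_pos (by norm_num) (pow_pos hγ₀ 2)
    have hden : (0:ℝ) < 2 * (16 / γ₀^2) * ((m₁ : ℝ) * α + n₁) * ((m₂ : ℝ) * α + n₂) + 1 := by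
      have := mul_pos (mul_pos (mul_pos two_pos hKpos) hu₁p) hu₂p
      linarith
    have hbd : 0 < |(β * m₁ + k₁) * ((m₂ : ℝ) * α + n₂) - (β * m₂ + k₂) * ((m₁ : ℝ) * α + n₁)|
        / (2 * (16 / γ₀^2) * ((m₁ : ℝ) * α + n₁) * ((m₂ : ℝ) * α + n₂) + 1) := div_pos hd hden
    obtain ⟨m₃, n₃, hu₃a, hu₃b⟩ := denseZZ hα 0
      (min (min ((m₁ : ℝ) * α + n₁) ((m₂ : ℝ) * α + n₂))
        (|(β * m₁ + k₁) * ((m₂ : ℝ) * α + n₂) - (β * m₂ + k₂) * ((m₁ : ℝ) * α + n₁)|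
          / (2 * (16 / γ₀^2) * ((m₁ : ℝ) * α + n₁) * ((m₂ : ℝ) * α + n₂) + 1)))
      (lt_min (lt_min hu₁p hu₂p) hbd)
    have hu₃u₁ : (m₃ : ℝ) * α + n₃ ≤ (m₁ : ℝ) * α + n₁ :=
      le_trans (le_of_lt hu₃b) (le_trans (min_le_left _ _) (min_le_left _ _))
    have hu₃u₂ : (m₃ : ℝ) * α + n₃ ≤ (m₂ : ℝ) * α + n₂ :=
      le_trans (le_of_lt hu₃b) (le_trans (min_le_left _ _) (min_le_right _ _))
    have hu₃d := lt_of_lt_of_le hu₃b (min_le_right _ _)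
    obtain ⟨k₃, hk₃⟩ := hL1 m₃ n₃ (by
      rw [abs_of_pos hu₃a]
      calc (m₃ : ℝ) * α + n₃ ≤ (m₁ : ℝ) * α + n₁ := hu₃u₁
      _ ≤ γ₀/64 := hu₁
      _ ≤ γ₀/4 := by linarith)
    rw [abs_of_pos hu₃a] at hk₃
    have h13 := stepL2' hγ₀ hL1 m₁ n₁ k₁ m₃ n₃ k₃ hu₁p hu₁ hu₃a hu₃u₁ he₁ hk₃
    have h23 := stepL2' hγ₀ hL1 m₂ n₂ k₂ m₃ n₃ k₃ hu₂p hu₂ hu₃a hu₃u₂ he₂ hk₃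
    set K : ℝ := 16 / γ₀^2 with hKdef
    set u₁ : ℝ := (m₁ : ℝ) * α + n₁ with hu₁def
    set u₂ : ℝ := (m₂ : ℝ) * α + n₂ with hu₂def
    set u₃ : ℝ := (m₃ : ℝ) * α + n₃ with hu₃def
    set e₁ : ℝ := β * m₁ + k₁ with he₁def
    set e₂ : ℝ := β * m₂ + k₂ with he₂def
    set e₃ : ℝ := β * m₃ + k₃ with he₃def
    set d : ℝ := |e₁ * u₂ - e₂ * u₁| with hddef
    clear_value K u₁ u₂ u₃ e₁ e₂ e₃ d
    have hident : (e₁ * u₂ - e₂ * u₁) * u₃ = (e₁ * u₃ - e₃ * u₁) * u₂ - (e₂ * u₃ - e₃ * u₂) * u₁ := by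
      ring
    have habs : d * u₃ ≤ u₁ * u₃^2 * K * u₂ + u₂ * u₃^2 * K * u₁ := by
      rw [hddef]
      calc |e₁ * u₂ - e₂ * u₁| * u₃ = |(e₁ * u₂ - e₂ * u₁) * u₃| := by
            rw [abs_mul, abs_of_pos hu₃a]
      _ = |(e₁ * u₃ - e₃ * u₁) * u₂ - (e₂ * u₃ - e₃ * u₂) * u₁| := by rw [hident]
      _ ≤ |(e₁ * u₃ - e₃ * u₁) * u₂| + |(e₂ * u₃ - e₃ * u₂) * u₁| := abs_sub _ _
      _ ≤ u₁ * u₃^2 * K * u₂ + u₂ * u₃^2 * K * u₁ := by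
            rw [abs_mul, abs_mul, abs_of_pos hu₁p, abs_of_pos hu₂p]
            have b1 : |e₁ * u₃ - e₃ * u₁| * u₂ ≤ u₁ * u₃^2 * K * u₂ :=
              mul_le_mul_of_nonneg_right h13 (le_of_lt hu₂p)
            have b2 : |e₂ * u₃ - e₃ * u₂| * u₁ ≤ u₂ * u₃^2 * K * u₁ :=
              mul_le_mul_of_nonneg_right h23 (le_of_lt hu₁p)
            linarith
    have hcontra : d ≤ 2 * K * u₁ * u₂ * u₃ := by
      have h1 : d * u₃ ≤ 2 * K * u₁ * u₂ * u₃ * u₃ := by nlinarith [habs]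
      nlinarith [h1, hu₃a]
    have hlt : 2 * K * u₁ * u₂ * u₃ < d := by
      have h2 : u₃ * (2 * K * u₁ * u₂ + 1) < d := by
        calc u₃ * (2 * K * u₁ * u₂ + 1) < d / (2 * K * u₁ * u₂ + 1) * (2 * K * u₁ * u₂ + 1) :=
              mul_lt_mul_of_pos_right hu₃d hden
        _ = d := div_mul_cancel₀ _ (ne_of_gt hden)
      nlinarith [h2, hu₃a]
    linarith
  -- choose first pair
  obtain ⟨m₁, n₁, hu₁a, hu₁b⟩ := denseZZ hα (γ₀/128) (γ₀/64) (by linarith)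
  have hu₁p : 0 < (m₁ : ℝ) * α + n₁ := by linarith [hu₁a, hγ₀]
  have hm₁ : m₁ ≠ 0 := by
    rintro rfl
    push_cast at hu₁a hu₁b
    rw [zero_mul, zero_add] at hu₁a hu₁b
    have h1 : 0 < (n₁ : ℝ) := by linarith
    have h2 : (n₁ : ℝ) < 1 := by linarith
    have h3 : 0 < n₁ := by exact_mod_cast h1
    have h4 : n₁ < 1 := by exact_mod_cast h2
    omega
  -- choose second pair
  have hm₁abs : (0:ℝ) < |(m₁ : ℝ)| + 1 := by positivity
  have hqpos : 0 < min (γ₀/64) (((m₁ : ℝ) * α + n₁) / (|(m₁ : ℝ)| + 1)) := by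
    apply lt_min (by linarith) (by positivity)
  obtain ⟨m₂, n₂, hu₂a, hu₂b⟩ := denseZZ hα 0 _ hqpos
  have hu₂p : 0 < (m₂ : ℝ) * α + n₂ := hu₂a
  have hu₂64 : (m₂ : ℝ) * α + n₂ ≤ γ₀/64 := le_trans (le_of_lt hu₂b) (min_le_left _ _)
  have hu₂m₁ : ((m₂ : ℝ) * α + n₂) * (|(m₁ : ℝ)| + 1) < (m₁ : ℝ) * α + n₁ := by
    have := lt_of_lt_of_le hu₂b (min_le_right _ _)
    calc ((m₂ : ℝ) * α + n₂) * (|(m₁ : ℝ)| + 1)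
        < ((m₁ : ℝ) * α + n₁) / (|(m₁ : ℝ)| + 1) * (|(m₁ : ℝ)| + 1) :=
          mul_lt_mul_of_pos_right this hm₁abs
    _ = (m₁ : ℝ) * α + n₁ := div_mul_cancel₀ _ (ne_of_gt hm₁abs)
  -- determinant nonzero
  have hdet : m₂ * n₁ - m₁ * n₂ ≠ 0 := by
    intro hdeq
    have hcross : (m₁ : ℝ) * ((m₂ : ℝ) * α + n₂) = (m₂ : ℝ) * ((m₁ : ℝ) * α + n₁) := by
      have : ((m₂ * n₁ : ℤ) : ℝ) = ((m₁ * n₂ : ℤ) : ℝ) := by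
        exact_mod_cast congrArg (fun z : ℤ => (z : ℝ)) (by omega : m₂ * n₁ = m₁ * n₂)
      push_cast at this
      ring_nf
      nlinarith [this]
    have hm₂ : m₂ = 0 := by
      by_contra hm₂
      have h1 : (1:ℝ) ≤ |(m₂ : ℝ)| := by
        have : (1:ℤ) ≤ |m₂| := by
          rcases lt_or_gt_of_ne hm₂ with h | h
          · rw [abs_of_neg h]; omega
          · rw [abs_of_pos h]; omega
        calc (1:ℝ) ≤ ((|m₂| : ℤ) : ℝ) := by exact_mod_cast this
        _ = |(m₂ : ℝ)| := by push_cast; rfl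
      have habs : |(m₁ : ℝ)| * ((m₂ : ℝ) * α + n₂) = |(m₂ : ℝ)| * ((m₁ : ℝ) * α + n₁) := by
        rcases abs_cases (m₁ : ℝ) with ⟨h, _⟩ | ⟨h, _⟩ <;>
          rcases abs_cases (m₂ : ℝ) with ⟨h', _⟩ | ⟨h', _⟩ <;> rw [h, h'] <;>
          nlinarith [hcross, hu₁p, hu₂p]
      nlinarith [habs, hu₂m₁, h1, hu₂p, hu₁p, abs_nonneg (m₁ : ℝ)]
    rw [hm₂] at hcross
    push_cast at hcross
    have hm₁' : (m₁ : ℝ) ≠ 0 := by exact_mod_cast hm₁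
    have hn₂ : (0:ℝ) < n₂ := by
      rw [hm₂] at hu₂p; push_cast at hu₂p; linarith
    have hn₂' : (n₂ : ℝ) < 1 := by
      rw [hm₂] at hu₂64; push_cast at hu₂64; linarith
    have h3 : 0 < n₂ := by exact_mod_cast hn₂
    have h4 : n₂ < 1 := by exact_mod_cast hn₂'
    omega
  -- apply hL1 to both pairs
  obtain ⟨k₁, hk₁⟩ := hL1 m₁ n₁ (by rw [abs_of_pos hu₁p]; linarith)
  obtain ⟨k₂, hk₂⟩ := hL1 m₂ n₂ (by rw [abs_of_pos hu₂p]; linarith)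
  rw [abs_of_pos hu₁p] at hk₁
  rw [abs_of_pos hu₂p] at hk₂
  have hEq := hratio m₁ n₁ k₁ m₂ n₂ k₂ hu₁p (by linarith) hu₂p hu₂64 hk₁ hk₂
  -- derive the rational relation
  have hkey : ((m₂ * k₁ - m₁ * k₂ : ℤ) : ℝ) * ((m₁ : ℝ) * α + n₁)
      = (β * m₁ + k₁) * ((m₂ * n₁ - m₁ * n₂ : ℤ) : ℝ) := by
    push_cast
    linear_combination (m₁ : ℝ) * hEq
  set z : ℤ := m₂ * k₁ - m₁ * k₂ with hzdef
  set dd : ℤ := m₂ * n₁ - m₁ * n₂ with hdddef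
  refine ⟨((z : ℚ) * n₁ - k₁ * dd) / (m₁ * dd), (z : ℚ) / dd, ?_⟩
  have hm₁' : (m₁ : ℝ) ≠ 0 := by exact_mod_cast hm₁
  have hdd' : ((dd : ℤ) : ℝ) ≠ 0 := by exact_mod_cast hdet
  have hβ : β = (((z:ℝ) * n₁ - (k₁:ℝ) * dd) + (z:ℝ) * α * m₁) / ((m₁:ℝ) * dd) := by
    rw [eq_div_iff (mul_ne_zero hm₁' hdd')]
    push_cast
    push_cast at hkey
    linear_combination -hkey
  have hc1 : ((((z : ℚ) * n₁ - k₁ * dd) / (m₁ * dd) : ℚ) : ℝ)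
      = ((z:ℝ) * (n₁:ℝ) - (k₁:ℝ) * (dd:ℝ)) / ((m₁:ℝ) * (dd:ℝ)) := by push_cast; ring
  have hc2 : (((z : ℚ) / dd : ℚ) : ℝ) = (z:ℝ) / (dd:ℝ) := by push_cast; ring
  rw [hc1, hc2, hβ]
  field_simp

set_option maxHeartbeats 1000000 in
lemma kron {α : ℝ} (hα : Irrational α) (c : ℝ)
    (hc : ∀ x y : ℚ, c ≠ (x : ℝ) + (y : ℝ) * α) :
    ∀ z δ v₁ v₂ : ℝ, 0 < δ → v₁ < v₂ →
      ∃ m n k : ℤ, v₁ < m * α + n ∧ m * α + n < v₂ ∧ |c * m + k - z| < δ := by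
  classical
  set V : AddSubgroup ℝ :=
    { carrier := {y | ∀ δ γ : ℝ, 0 < δ → 0 < γ →
        ∃ m n k : ℤ, |(m : ℝ) * α + n| < γ ∧ |c * m + k - y| < δ}
      zero_mem' := by
        intro δ γ hδ hγ
        exact ⟨0, 0, 0, by norm_num [hγ], by norm_num [hδ]⟩
      add_mem' := by
        rintro a b ha hb δ γ hδ hγ
        obtain ⟨m, n, k, h1, h2⟩ := ha (δ/2) (γ/2) (by linarith) (by linarith)
        obtain ⟨m', n', k', h1', h2'⟩ := hb (δ/2) (γ/2) (by linarith) (by linarith)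
        refine ⟨m + m', n + n', k + k', ?_, ?_⟩
        · push_cast
          have h3 : ((m : ℝ) + m') * α + ((n : ℝ) + n') = ((m : ℝ) * α + n) + ((m' : ℝ) * α + n') := by
            ring
          rw [h3]
          exact lt_of_le_of_lt (abs_add_le _ _) (by linarith)
        · push_cast
          have h3 : c * ((m : ℝ) + m') + ((k : ℝ) + k') - (a + b)
              = (c * m + k - a) + (c * m' + k' - b) := by ring
          rw [h3]
          exact lt_of_le_of_lt (abs_add_le _ _) (by linarith)
      neg_mem' := by
        rintro a ha δ γ hδ hγ
        obtain ⟨m, n, k, h1, h2⟩ := ha δ γ hδ hγ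
        refine ⟨-m, -n, -k, ?_, ?_⟩
        · push_cast
          have h3 : -(m : ℝ) * α + -(n : ℝ) = -((m : ℝ) * α + n) := by ring
          rw [h3, abs_neg]
          exact h1
        · push_cast
          have h3 : c * -(m : ℝ) + -(k : ℝ) - -a = -(c * m + k - a) := by ring
          rw [h3, abs_neg]
          exact h2 } with hVdef
  have hVmem : ∀ y : ℝ, y ∈ V ↔ ∀ δ γ : ℝ, 0 < δ → 0 < γ →
      ∃ m n k : ℤ, |(m : ℝ) * α + n| < γ ∧ |c * m + k - y| < δ := by
    intro y; rfl
  rcases V.dense_or_cyclic with hdense | ⟨g, hgV⟩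
  · -- dense case
    intro z δ v₁ v₂ hδ hv
    obtain ⟨m₀, n₀, h0a, h0b⟩ := denseZZ hα v₁ v₂ hv
    set γ : ℝ := min (v₂ - ((m₀ : ℝ) * α + n₀)) (((m₀ : ℝ) * α + n₀) - v₁) with hγdef
    have hγpos : 0 < γ := lt_min (by linarith) (by linarith)
    have hz := hdense (z - c * m₀)
    rw [Metric.mem_closure_iff] at hz
    obtain ⟨y', hy'V, hy'⟩ := hz (δ/2) (by linarith)
    rw [Real.dist_eq] at hy'
    rw [SetLike.mem_coe, hVmem] at hy'V
    obtain ⟨m, n, k, h1, h2⟩ := hy'V (δ/2) γ (by linarith) hγpos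
    refine ⟨m₀ + m, n₀ + n, k, ?_, ?_, ?_⟩
    · push_cast
      rw [abs_lt] at h1
      have := min_le_right (v₂ - ((m₀ : ℝ) * α + n₀)) (((m₀ : ℝ) * α + n₀) - v₁)
      nlinarith [h1.1, h1.2]
    · push_cast
      rw [abs_lt] at h1
      have := min_le_left (v₂ - ((m₀ : ℝ) * α + n₀)) (((m₀ : ℝ) * α + n₀) - v₁)
      nlinarith [h1.1, h1.2]
    · push_cast
      calc |c * ((m₀ : ℝ) + m) + k - z|
          = |(c * m + k - y') - ((z - c * m₀) - y')| := by ring_nf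
      _ ≤ |c * m + k - y'| + |(z - c * m₀) - y'| := abs_sub _ _
      _ < δ := by linarith
  · -- cyclic case: contradiction
    exfalso
    have h1V : (1 : ℝ) ∈ V := by
      rw [hVmem]
      intro δ γ hδ hγ
      exact ⟨0, 0, 1, by norm_num [hγ], by norm_num [hδ]⟩
    rw [hgV, AddSubgroup.mem_closure_singleton] at h1V
    obtain ⟨N, hN⟩ := h1V
    rw [zsmul_eq_mul] at hN
    have hN0 : N ≠ 0 := by rintro rfl; simp at hN
    have hNR : (N : ℝ) ≠ 0 := by exact_mod_cast hN0
    have hNabs : (0:ℝ) < |(N : ℝ)| := abs_pos.mpr hNR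
    -- continuity at 0 of the fiber map
    have HC : ∀ δ : ℝ, 0 < δ → ∃ γ : ℝ, 0 < γ ∧
        ∀ m n : ℤ, |(m : ℝ) * α + n| < γ → ∃ j k : ℤ, |c * m + k - j * g| < δ := by
      intro δ hδ
      by_contra hno
      push_neg at hno
      choose M Nf hsmall hfar using fun i : ℕ => hno (1/((i:ℝ)+1)) (by positivity)
      set Y : ℕ → ℝ := fun i => Int.fract (c * M i) with hY
      have hYmem : ∀ i, Y i ∈ Set.Icc (0:ℝ) 1 :=
        fun i => ⟨Int.fract_nonneg _, (Int.fract_lt_one _).le⟩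
      obtain ⟨ystar, hyIcc, φ, hφ, htend⟩ :=
        (isCompact_Icc (a := (0:ℝ)) (b := 1)).tendsto_subseq hYmem
      rw [Metric.tendsto_atTop] at htend
      have hyV : ystar ∈ V := by
        rw [hVmem]
        intro δ' γ' hδ' hγ'
        obtain ⟨I, hI⟩ := htend δ' hδ'
        obtain ⟨I₂, hI₂⟩ := exists_nat_gt (1/γ')
        have hd : dist (Y (φ (max I I₂))) ystar < δ' := hI _ (le_max_left _ _)
        have hφi : (I₂ : ℝ) ≤ ((φ (max I I₂) : ℕ) : ℝ) := by
          have h1 : I₂ ≤ max I I₂ := le_max_right _ _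
          have h2 : max I I₂ ≤ φ (max I I₂) := hφ.le_apply
          exact_mod_cast le_trans h1 h2
        have hgt : 1/γ' < ((φ (max I I₂) : ℕ) : ℝ) + 1 := by linarith
        have hsm : |(M (φ (max I I₂)) : ℝ) * α + Nf (φ (max I I₂))| < γ' := by
          refine lt_trans (hsmall (φ (max I I₂))) ?_
          rw [div_lt_iff₀ (by positivity : (0:ℝ) < ((φ (max I I₂) : ℕ) : ℝ) + 1)]
          have h2 : γ' * (1/γ') < γ' * (((φ (max I I₂) : ℕ) : ℝ) + 1) :=
            mul_lt_mul_of_pos_left hgt hγ'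
          rw [mul_one_div_cancel (ne_of_gt hγ')] at h2
          linarith
        refine ⟨M (φ (max I I₂)), Nf (φ (max I I₂)), -⌊c * M (φ (max I I₂))⌋, hsm, ?_⟩
        have heq : c * (M (φ (max I I₂)) : ℝ) + ((-⌊c * (M (φ (max I I₂)) : ℝ)⌋ : ℤ) : ℝ) - ystar
            = Y (φ (max I I₂)) - ystar := by
          rw [hY]
          simp only [Int.fract]
          push_cast
          ring
        rw [heq, ← Real.dist_eq]
        exact hd
      rw [hgV, AddSubgroup.mem_closure_singleton] at hyV
      obtain ⟨jstar, hjstar⟩ := hyV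
      rw [zsmul_eq_mul] at hjstar
      obtain ⟨I, hI⟩ := htend δ hδ
      have hd := hI I le_rfl
      have hff := hfar (φ I) jstar (-⌊c * (M (φ I) : ℝ)⌋)
      apply absurd hff
      push_neg
      have heq : c * (M (φ I) : ℝ) + ((-⌊c * (M (φ I) : ℝ)⌋ : ℤ) : ℝ) - (jstar : ℝ) * g
          = Y (φ I) - ystar := by
        rw [hY, ← hjstar]
        simp only [Int.fract]
        push_cast
        ring
      rw [heq, ← Real.dist_eq]
      exact hd
    have H' : ∀ δ : ℝ, 0 < δ → ∃ γ : ℝ, 0 < γ ∧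
        ∀ m n : ℤ, |(m : ℝ) * α + n| < γ → ∃ k : ℤ, |((N : ℝ) * c) * m + k| < δ := by
      intro δ hδ
      obtain ⟨γ, hγ, hH⟩ := HC (δ / |(N:ℝ)|) (div_pos hδ hNabs)
      refine ⟨γ, hγ, ?_⟩
      intro m n hmn
      obtain ⟨j, k, hjk⟩ := hH m n hmn
      refine ⟨N * k - j, ?_⟩
      have heq : ((N:ℝ) * c) * m + ((N * k - j : ℤ) : ℝ) = (N : ℝ) * (c * m + k - j * g) := by
        push_cast
        linear_combination (j : ℝ) * hN
      rw [heq, abs_mul]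
      calc |(N:ℝ)| * |c * m + k - j * g| < |(N:ℝ)| * (δ / |(N:ℝ)|) :=
            mul_lt_mul_of_pos_left hjk hNabs
      _ = δ := by field_simp
    obtain ⟨x, y, hxy⟩ := lemX hα ((N : ℝ) * c) H'
    have hNQ : (N : ℚ) ≠ 0 := by exact_mod_cast hN0
    apply hc (x / N) (y / N)
    push_cast
    field_simp
    first
    | linear_combination hxy
    | linear_combination -hxy
    | linear_combination (N:ℝ) * hxy
    | (rw [eq_comm]; linear_combination hxy)

set_option maxHeartbeats 1000000 in
theorem stmt17 (θ : ℝ) (hθ : Irrational (Real.tan θ)) (ε : ℝ) (hε : 0 < ε) (s : ℝ)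
    (hL : ¬ Dense {p : ℝ × ℝ | ∃ m n k : ℤ, ∃ t : ℝ,
      0 ≤ (m : ℝ) * Real.sin θ + (n : ℝ) * Real.cos θ ∧
      (m : ℝ) * Real.sin θ + (n : ℝ) * Real.cos θ < ε ∧
      p = ((m : ℝ) * Real.cos θ - (n : ℝ) * Real.sin θ + t, (k : ℝ) + s * t)}) :
    ∃ p q : ℚ, s = (p : ℝ) * Real.cos θ + (q : ℝ) * Real.sin θ := by
  by_contra hs
  push_neg at hs
  apply hL
  have hcos : Real.cos θ ≠ 0 := by
    intro h
    have h2 := hθ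
    rw [Real.tan_eq_sin_div_cos, h, div_zero] at h2
    exact h2 ⟨0, by norm_num⟩
  have hαeq : Real.tan θ = Real.sin θ / Real.cos θ := Real.tan_eq_sin_div_cos θ
  have hsin : Real.sin θ = Real.tan θ * Real.cos θ := by
    rw [hαeq]; field_simp
  have hpy : Real.sin θ ^ 2 + Real.cos θ ^ 2 = 1 := Real.sin_sq_add_cos_sq θ
  have hc : ∀ x y : ℚ, s / Real.cos θ ≠ (x : ℝ) + (y : ℝ) * Real.tan θ := by
    intro x y hxy
    apply hs x y
    have h1 : s = (s / Real.cos θ) * Real.cos θ := by field_simp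
    rw [h1, hxy, hαeq]
    first
    | (field_simp; ring)
    | field_simp
    | ring
  rw [Metric.dense_iff]
  rintro ⟨x₀, y₀⟩ r hr
  have hWpos : 0 < r / (2 * (|s * Real.sin θ| + 1)) := by positivity
  obtain ⟨v₁, v₂, hv, hwidth, hwin⟩ : ∃ v₁ v₂ : ℝ, v₁ < v₂ ∧
      v₂ - v₁ ≤ r / (2 * (|s * Real.sin θ| + 1)) ∧
      ∀ u : ℝ, v₁ < u → u < v₂ → 0 ≤ Real.cos θ * u ∧ Real.cos θ * u < ε := by
    rcases lt_or_gt_of_ne hcos with hneg | hpos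
    · refine ⟨max (ε / Real.cos θ) (-(r / (2 * (|s * Real.sin θ| + 1)))), 0, ?_, ?_, ?_⟩
      · apply max_lt (div_neg_of_pos_of_neg hε hneg) (by linarith)
      · have := le_max_right (ε / Real.cos θ) (-(r / (2 * (|s * Real.sin θ| + 1))))
        linarith
      · intro u hu1 hu2
        constructor
        · exact (mul_pos_of_neg_of_neg hneg hu2).le
        · have h3 : ε / Real.cos θ < u := lt_of_le_of_lt (le_max_left _ _) hu1
          rw [div_lt_iff_of_neg hneg] at h3
          linarith [h3]
    · refine ⟨0, min (ε / Real.cos θ) (r / (2 * (|s * Real.sin θ| + 1))), ?_, ?_, ?_⟩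
      · exact lt_min (div_pos hε hpos) hWpos
      · have := min_le_right (ε / Real.cos θ) (r / (2 * (|s * Real.sin θ| + 1)))
        linarith
      · intro u hu1 hu2
        constructor
        · positivity
        · have h3 : u < ε / Real.cos θ := lt_of_lt_of_le hu2 (min_le_left _ _)
          rw [lt_div_iff₀ hpos] at h3
          linarith [h3]
  obtain ⟨m, n, k, hu1, hu2, hclose⟩ := kron hθ (s / Real.cos θ) hc
    (s * x₀ - y₀ + (s * Real.sin θ) * v₁) (r/2) v₁ v₂ (by linarith) hv
  obtain ⟨hw0, hwε⟩ := hwin _ hu1 hu2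
  have hwindow : (m : ℝ) * Real.sin θ + (n : ℝ) * Real.cos θ
      = Real.cos θ * ((m : ℝ) * Real.tan θ + n) := by
    rw [hsin]; ring
  have hid : s * ((m : ℝ) * Real.cos θ - (n : ℝ) * Real.sin θ)
      = (s / Real.cos θ) * m - (s * Real.sin θ) * ((m : ℝ) * Real.tan θ + n) := by
    have h8 : Real.cos θ ^ 2 = 1 - Real.sin θ^2 := by linarith [hpy]
    rw [hαeq]
    field_simp
    linear_combination (s * (m : ℝ)) * hpy
  refine ⟨(x₀, ((-k : ℤ) : ℝ) + s * (x₀ - ((m : ℝ) * Real.cos θ - (n : ℝ) * Real.sin θ))), ?_, ?_⟩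
  · -- in the ball
    rw [Metric.mem_ball, Prod.dist_eq]
    apply max_lt
    · rw [Real.dist_eq]; simpa using hr
    · rw [Real.dist_eq]
      push_cast
      have habs1 : |(s / Real.cos θ) * m + k - (s * x₀ - y₀ + (s * Real.sin θ) * v₁)| < r/2 :=
        hclose
      have habs3 : |s * Real.sin θ| * (r / (2 * (|s * Real.sin θ| + 1))) < r/2 := by
        have h4 : (0:ℝ) ≤ |s * Real.sin θ| := abs_nonneg _
        rw [← mul_div_assoc, div_lt_div_iff₀ (by positivity) (by norm_num : (0:ℝ) < 2)]
        nlinarith [hr, h4, mul_nonneg h4 hr.le]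
      have hdecomp : -(k : ℝ) + s * (x₀ - ((m : ℝ) * Real.cos θ - (n : ℝ) * Real.sin θ)) - y₀
          = -((s / Real.cos θ) * m + k - (s * x₀ - y₀ + (s * Real.sin θ) * v₁))
            + (s * Real.sin θ) * (((m : ℝ) * Real.tan θ + n) - v₁) := by
        linear_combination -hid
      rw [hdecomp]
      have hbound : |(s * Real.sin θ) * (((m : ℝ) * Real.tan θ + n) - v₁)| < r/2 := by
        rw [abs_mul]
        have h6 : |(m : ℝ) * Real.tan θ + n - v₁| ≤ v₂ - v₁ := by
          rw [abs_of_pos (by linarith)]; linarith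
        calc |s * Real.sin θ| * |(m : ℝ) * Real.tan θ + n - v₁|
            ≤ |s * Real.sin θ| * (r / (2 * (|s * Real.sin θ| + 1))) :=
              mul_le_mul_of_nonneg_left (le_trans h6 hwidth) (abs_nonneg _)
        _ < r/2 := habs3
      calc |-((s / Real.cos θ) * m + k - (s * x₀ - y₀ + (s * Real.sin θ) * v₁))
          + (s * Real.sin θ) * (((m : ℝ) * Real.tan θ + n) - v₁)|
          ≤ |-((s / Real.cos θ) * m + k - (s * x₀ - y₀ + (s * Real.sin θ) * v₁))|
            + |(s * Real.sin θ) * (((m : ℝ) * Real.tan θ + n) - v₁)| := abs_add_le _ _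
      _ < r/2 + r/2 := add_lt_add (by rw [abs_neg]; exact habs1) hbound
      _ = r := by ring
  · -- in L
    refine ⟨m, n, -k, x₀ - ((m : ℝ) * Real.cos θ - (n : ℝ) * Real.sin θ), ?_, ?_, ?_⟩
    · rw [hwindow]; exact hw0
    · rw [hwindow]; exact hwε
    · rw [Prod.ext_iff]
      constructor
      · push_cast; ring
      · push_cast; ring
end
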